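/- arXiv:1312.3428 — 3 statements merged into one kernel-verified Lean document; each statement's English description precedes it below -/
import Mathlib

section
/- If M is a matroid on E = {1,…,d} whose toric ideal J_M has a Gröbner basis (with respect to some monomial order) consisting of quadratic binomials, then for every c ∈ E the toric ideal of the parallel extension of M at c by d+1, i.e. of the matroid (M* +_c (d+1))*, has a Gröbner basis (with respect to some monomial order) consisting of quadratic binomials. -/
open MvPolynomial


section Groebner
variable {σ : Type} {K : Type} [Field K]

/-- The leading exponent (exponent of the initial monomial) of a polynomial
with respect to a monomial order. -/
noncomputable def mLeadExp (m : MonomialOrder.{0,0} σ) (f : MvPolynomial σ K) : σ →₀ ℕ :=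
  m.toSyn.symm (f.support.sup fun a => m.toSyn a)

/-- The initial ideal of `I` with respect to a monomial order: the ideal generated by the
initial monomials of the nonzero elements of `I`. -/
noncomputable def mInitialIdeal (m : MonomialOrder.{0,0} σ) (I : Ideal (MvPolynomial σ K)) :
    Ideal (MvPolynomial σ K) :=
  Ideal.span {g | ∃ f ∈ I, f ≠ 0 ∧ g = monomial (mLeadExp m f) (1 : K)}

/-- `G` is a Gröbner basis of the ideal `I` with respect to the monomial order `m`. -/
def IsGroebnerBasis (m : MonomialOrder.{0,0} σ) (I : Ideal (MvPolynomial σ K))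
    (G : Set (MvPolynomial σ K)) : Prop :=
  G ⊆ (I : Set (MvPolynomial σ K)) ∧ (0 : MvPolynomial σ K) ∉ G ∧
    Ideal.span ((fun f => monomial (mLeadExp m f) (1 : K)) '' G) = mInitialIdeal m I

/-- The `ω`-weight of an exponent vector. -/
def wtSum (ω : σ → ℕ) (a : σ →₀ ℕ) : ℕ := a.sum fun s e => ω s * e

end Groebner

section Toric

/-- The toric (bases monomial) map of a matroid: the variables are indexed by the bases of `M`,
and the variable of a basis `B` is sent to `∏_{l ∈ B} s_l`. -/
noncomputable def matroidToricMap (K : Type) [Field K] {α : Type} [Fintype α] [DecidableEq α]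
    (M : Matroid α) :
    MvPolynomial {B : Finset α // M.IsBase ↑B} K →ₐ[K] MvPolynomial α K :=
  aeval fun b => ∏ l ∈ b.1, X l

/-- The toric ideal `J_M` of a matroid `M`. -/
noncomputable def matroidToricIdeal (K : Type) [Field K] {α : Type} [Fintype α] [DecidableEq α]
    (M : Matroid α) : Ideal (MvPolynomial {B : Finset α // M.IsBase ↑B} K) :=
  RingHom.ker (matroidToricMap K M).toRingHom

/-- `G` consists of quadratic binomials `x_i x_j - x_k x_l`. -/
def IsQuadBinomialSet {σ K : Type} [Field K] (G : Set (MvPolynomial σ K)) : Prop :=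
  ∀ f ∈ G, ∃ i j k l : σ, f = X i * X j - X k * X l

/-- The ideal `I` is generated by quadratic binomials. -/
def GeneratedByQuadBinomials {σ K : Type} [Field K] (I : Ideal (MvPolynomial σ K)) : Prop :=
  ∃ G : Set (MvPolynomial σ K), IsQuadBinomialSet G ∧ Ideal.span G = I

/-- The ideal `I` has a Gröbner basis, with respect to some monomial order,
consisting of quadratic binomials. -/
def HasQuadraticGroebnerBasis {σ K : Type} [Field K] (I : Ideal (MvPolynomial σ K)) : Prop :=
  ∃ (m : MonomialOrder.{0,0} σ) (G : Set (MvPolynomial σ K)),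
    IsQuadBinomialSet G ∧ IsGroebnerBasis m I G

end Toric

section PartA
variable {σ K : Type} [Field K] (m : MonomialOrder.{0,0} σ)

lemma toSyn_mLeadExp (f : MvPolynomial σ K) :
    m.toSyn (mLeadExp m f) = f.support.sup fun a => m.toSyn a := by
  simp [mLeadExp]

lemma mLeadExp_mem {f : MvPolynomial σ K} (hf : f ≠ 0) : mLeadExp m f ∈ f.support := by
  obtain ⟨a, ha, h⟩ := Finset.exists_mem_eq_sup f.support
    (by simpa [MvPolynomial.support_nonempty] using hf) (fun a => m.toSyn a)
  have : mLeadExp m f = a := by rw [mLeadExp, h, AddEquiv.symm_apply_apply]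
  rwa [this]

lemma le_mLeadExp {f : MvPolynomial σ K} {b : σ →₀ ℕ} (hb : b ∈ f.support) :
    m.toSyn b ≤ m.toSyn (mLeadExp m f) := by
  rw [toSyn_mLeadExp]; exact Finset.le_sup hb

lemma binomial_ne_zero {a b : σ →₀ ℕ} (hab : a ≠ b) :
    (monomial a (1:K) - monomial b 1) ≠ 0 := by
  classical
  intro h
  have := congrArg (coeff a) h
  rw [coeff_sub, coeff_monomial, coeff_monomial, if_pos rfl, if_neg (Ne.symm hab)] at this
  simp at this

lemma mLeadExp_binomial {a b : σ →₀ ℕ} (h : m.toSyn b < m.toSyn a) :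
    mLeadExp m (monomial a (1:K) - monomial b 1) = a := by
  classical
  have hab : a ≠ b := fun e => absurd (congrArg m.toSyn e) h.ne'
  apply m.toSyn.injective
  rw [toSyn_mLeadExp]
  apply le_antisymm
  · apply Finset.sup_le
    intro x hx
    have hco : coeff x (monomial a (1:K) - monomial b 1) ≠ 0 := by simpa using hx
    rw [coeff_sub, coeff_monomial, coeff_monomial] at hco
    rcases eq_or_ne a x with rfl | hxa
    · exact le_rfl
    · rcases eq_or_ne b x with rfl | hxb
      · exact h.le
      · simp [if_neg hxa, if_neg hxb] at hco
  · apply Finset.le_sup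
    rw [MvPolynomial.mem_support_iff, coeff_sub, coeff_monomial, coeff_monomial,
      if_pos rfl, if_neg hab.symm]
    simp

lemma mLeadExp_neg {f : MvPolynomial σ K} : mLeadExp m (-f) = mLeadExp m f := by
  rw [mLeadExp, mLeadExp, MvPolynomial.support_neg]

lemma exists_le_of_monomial_mem_span {a : σ →₀ ℕ} {S : Set (MvPolynomial σ K)}
    {E : MvPolynomial σ K → (σ →₀ ℕ)}
    (h : monomial a (1:K) ∈ Ideal.span ((fun g => monomial (E g) (1:K)) '' S)) :
    ∃ g ∈ S, E g ≤ a := by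
  classical
  by_contra hn
  push_neg at hn
  obtain ⟨cc, hsupp, hsum⟩ := Submodule.mem_span_set.mp h
  have h1 : coeff a (monomial a (1:K)) = 1 := by simp
  rw [← hsum] at h1
  rw [Finsupp.sum, coeff_sum] at h1
  have : ∀ p ∈ cc.support, coeff a (cc p • p) = 0 := by
    intro p hp
    obtain ⟨g, hg, rfl⟩ := hsupp hp
    rw [smul_eq_mul, coeff_mul_monomial']
    rw [if_neg (hn g hg)]
  rw [Finset.sum_eq_zero this] at h1
  exact one_ne_zero h1.symm

variable {τ : Type}

noncomputable def eSum (e : σ → (τ →₀ ℕ)) (a : σ →₀ ℕ) : τ →₀ ℕ := a.sum fun z n => n • e z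

lemma eSum_add (e : σ → (τ →₀ ℕ)) (a b : σ →₀ ℕ) : eSum e (a+b) = eSum e a + eSum e b :=
  Finsupp.sum_add_index' (fun _ => by simp) (fun _ _ _ => add_smul _ _ _)

lemma eSum_single (e : σ → (τ →₀ ℕ)) (z : σ) (n : ℕ) : eSum e (Finsupp.single z n) = n • e z :=
  Finsupp.sum_single_index (by simp)

lemma prod_monomial_one {s : Finset σ} {g : σ → (τ →₀ ℕ)} :
    (∏ z ∈ s, (monomial (g z) (1:K))) = monomial (∑ z ∈ s, g z) 1 := by
  induction s using Finset.cons_induction with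
  | empty => rw [Finset.prod_empty, Finset.sum_empty]; rw [← C_apply, C_1]
  | cons z s hz ih =>
      rw [Finset.prod_cons, Finset.sum_cons, ih, monomial_mul, one_mul]

lemma pi_monomial {e : σ → (τ →₀ ℕ)} (π : MvPolynomial σ K →ₐ[K] MvPolynomial τ K)
    (hπ : ∀ z, π (X z) = monomial (e z) 1) (a : σ →₀ ℕ) (r : K) :
    π (monomial a r) = monomial (eSum e a) r := by
  rw [MvPolynomial.aeval_unique π, aeval_monomial, Finsupp.prod]
  have h2 : ∀ z ∈ a.support, (⇑π ∘ X) z ^ a z = monomial (a z • e z) (1:K) := fun z _ => by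
    simp only [Function.comp_apply, hπ, monomial_pow, one_pow]
  rw [Finset.prod_congr rfl h2, prod_monomial_one, algebraMap_eq, C_mul_monomial, mul_one]
  rfl

lemma pi_eq_sum {e : σ → (τ →₀ ℕ)} (π : MvPolynomial σ K →ₐ[K] MvPolynomial τ K)
    (hπ : ∀ z, π (X z) = monomial (e z) 1) (f : MvPolynomial σ K) :
    π f = ∑ a ∈ f.support, monomial (eSum e a) (coeff a f) := by
  conv_lhs => rw [f.as_sum]
  rw [map_sum]
  exact Finset.sum_congr rfl fun a _ => pi_monomial π hπ a _

lemma exists_partner {e : σ → (τ →₀ ℕ)} {π : MvPolynomial σ K →ₐ[K] MvPolynomial τ K}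
    (hπ : ∀ z, π (X z) = monomial (e z) 1) {f : MvPolynomial σ K} (hf : π f = 0)
    {a : σ →₀ ℕ} (ha : a ∈ f.support) :
    ∃ b ∈ f.support, b ≠ a ∧ eSum e b = eSum e a := by
  classical
  by_contra hn
  push_neg at hn
  have hco : coeff (eSum e a) (π f) = coeff a f := by
    rw [pi_eq_sum π hπ, coeff_sum, Finset.sum_eq_single a]
    · simp [coeff_monomial]
    · intro b hb hba
      rw [coeff_monomial, if_neg (hn b hb hba)]
    · intro h; exact absurd ha h
  rw [hf] at hco
  simp only [coeff_zero] at hco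
  exact MvPolynomial.mem_support_iff.mp ha hco.symm

theorem isGB_of_fiber (e : σ → (τ →₀ ℕ)) (π : MvPolynomial σ K →ₐ[K] MvPolynomial τ K)
    (hπ : ∀ z, π (X z) = monomial (e z) 1)
    (G : Set (MvPolynomial σ K))
    (hG : G ⊆ (RingHom.ker π.toRingHom : Set (MvPolynomial σ K)))
    (h0 : (0:MvPolynomial σ K) ∉ G)
    (H : ∀ a b : σ →₀ ℕ, eSum e a = eSum e b → m.toSyn b < m.toSyn a →
        ∃ g ∈ G, mLeadExp m g ≤ a) :
    IsGroebnerBasis m (RingHom.ker π.toRingHom) G := by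
  refine ⟨hG, h0, le_antisymm ?_ ?_⟩
  · rw [Ideal.span_le]
    rintro _ ⟨g, hg, rfl⟩
    apply Ideal.subset_span
    exact ⟨g, hG hg, fun h => h0 (h ▸ hg), rfl⟩
  · rw [mInitialIdeal, Ideal.span_le]
    rintro _ ⟨f, hfI, hf0, rfl⟩
    have hπf : π f = 0 := hfI
    have ha : mLeadExp m f ∈ f.support := mLeadExp_mem m hf0
    obtain ⟨b, hbsup, hba, heq⟩ := exists_partner hπ hπf ha
    have hlt : m.toSyn b < m.toSyn (mLeadExp m f) :=
      lt_of_le_of_ne (le_mLeadExp m hbsup) (fun h => hba (m.toSyn.injective h))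
    obtain ⟨g, hgG, hle⟩ := H (mLeadExp m f) b heq.symm hlt
    have : monomial (mLeadExp m f) (1:K)
        = monomial (mLeadExp m f - mLeadExp m g) 1 * monomial (mLeadExp m g) 1 := by
      rw [monomial_mul, one_mul, tsub_add_cancel_of_le hle]
    rw [this]
    exact Ideal.mul_mem_left _ _ (Ideal.subset_span ⟨g, hgG, rfl⟩)

theorem fiber_of_isGB {e : σ → (τ →₀ ℕ)} {π : MvPolynomial σ K →ₐ[K] MvPolynomial τ K}
    (hπ : ∀ z, π (X z) = monomial (e z) 1) {G : Set (MvPolynomial σ K)}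
    (hGB : IsGroebnerBasis m (RingHom.ker π.toRingHom) G) :
    ∀ a b : σ →₀ ℕ, eSum e a = eSum e b → m.toSyn b < m.toSyn a →
      ∃ g ∈ G, mLeadExp m g ≤ a := by
  intro a b he hlt
  have hab : a ≠ b := fun h => absurd (congrArg m.toSyn h) hlt.ne'
  have hfI : (monomial a (1:K) - monomial b 1) ∈ RingHom.ker π.toRingHom := by
    have : π (monomial a (1:K) - monomial b 1) = 0 := by
      rw [map_sub, pi_monomial π hπ, pi_monomial π hπ, he, sub_self]
    exact this
  have hf0 := binomial_ne_zero (K := K) hab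
  have hmem : monomial a (1:K) ∈ mInitialIdeal m (RingHom.ker π.toRingHom) := by
    apply Ideal.subset_span
    exact ⟨_, hfI, hf0, by rw [mLeadExp_binomial m hlt]⟩
  rw [← hGB.2.2] at hmem
  exact exists_le_of_monomial_mem_span hmem

end PartA

section Comb

open Finsupp

variable {τ σ : Type} (φ : τ → σ) (m : MonomialOrder.{0,0} σ) (m₂ : MonomialOrder.{0,0} τ)

noncomputable def combMap (a : τ →₀ ℕ) : m.syn ×ₗ m₂.syn :=
  toLex (m.toSyn (Finsupp.mapDomain φ a), m₂.toSyn a)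

lemma combMap_inj : Function.Injective (combMap φ m m₂) := fun a b h => by
  have h2 : (ofLex (combMap φ m m₂ a)).2 = (ofLex (combMap φ m m₂ b)).2 := by rw [h]
  exact m₂.toSyn.injective h2

lemma combMap_le_iff {a b : τ →₀ ℕ} : combMap φ m m₂ a ≤ combMap φ m m₂ b ↔
    m.toSyn (Finsupp.mapDomain φ a) < m.toSyn (Finsupp.mapDomain φ b) ∨
      (m.toSyn (Finsupp.mapDomain φ a) = m.toSyn (Finsupp.mapDomain φ b) ∧
        m₂.toSyn a ≤ m₂.toSyn b) :=
  Prod.Lex.le_iff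

lemma combMap_lt_iff {a b : τ →₀ ℕ} : combMap φ m m₂ a < combMap φ m m₂ b ↔
    m.toSyn (Finsupp.mapDomain φ a) < m.toSyn (Finsupp.mapDomain φ b) ∨
      (m.toSyn (Finsupp.mapDomain φ a) = m.toSyn (Finsupp.mapDomain φ b) ∧
        m₂.toSyn a < m₂.toSyn b) :=
  Prod.Lex.lt_iff

noncomputable def combLO : LinearOrder (τ →₀ ℕ) :=
  LinearOrder.lift' (combMap φ m m₂) (combMap_inj φ m m₂)

lemma mapDomain_mono {a b : τ →₀ ℕ} (h : a ≤ b) :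
    Finsupp.mapDomain φ a ≤ Finsupp.mapDomain φ b := by
  obtain ⟨c, rfl⟩ := le_iff_exists_add.mp h
  rw [Finsupp.mapDomain_add]
  exact le_add_right le_rfl

noncomputable def combLOCACM :
    @IsOrderedAddMonoid (τ →₀ ℕ) _ (combLO φ m m₂).toPartialOrder.toPreorder :=
  have hl : ∀ a b : τ →₀ ℕ, combMap φ m m₂ a ≤ combMap φ m m₂ b →
      ∀ c, combMap φ m m₂ (a + c) ≤ combMap φ m m₂ (b + c) := by
      intro a b hab c
      have hab' : combMap φ m m₂ a ≤ combMap φ m m₂ b := hab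
      rw [combMap_le_iff] at hab' ⊢
      rw [Finsupp.mapDomain_add, Finsupp.mapDomain_add, map_add, map_add, map_add, map_add]
      rcases hab' with h | ⟨h1, h2⟩
      · exact Or.inl (add_lt_add_left h _)
      · exact Or.inr ⟨by rw [h1], add_le_add_left h2 _⟩
  @IsOrderedAddMonoid.mk (τ →₀ ℕ) _ (combLO φ m m₂).toPartialOrder.toPreorder
    (fun a b hab c => hl a b hab c)
    (fun a b hab c => by
      have := hl a b hab c
      rw [add_comm a, add_comm b] at this
      exact this)

noncomputable def MonomialOrder.comb : MonomialOrder.{0,0} τ where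
  syn := τ →₀ ℕ
  linearOrderSyn := combLO φ m m₂
  isOrderedAddMonoid_syn := combLOCACM φ m m₂
  toSyn := AddEquiv.refl _
  toSyn_monotone := by
    intro a b hab
    show (combLO φ m m₂).le a b
    show combMap φ m m₂ a ≤ combMap φ m m₂ b
    rw [combMap_le_iff]
    rcases lt_or_eq_of_le (m.toSyn_monotone (mapDomain_mono φ hab)) with h | h
    · exact Or.inl h
    · exact Or.inr ⟨h, m₂.toSyn_monotone hab⟩
  wellFoundedLT_syn := by
    constructor
    have hwf : WellFounded ((· < ·) : m.syn ×ₗ m₂.syn → m.syn ×ₗ m₂.syn → Prop) :=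
      wellFounded_lt
    exact Subrelation.wf (fun {a b} h => (h : InvImage (· < ·) (combMap φ m m₂) a b))
      (InvImage.wf (combMap φ m m₂) hwf)

lemma comb_toSyn_lt_iff {a b : τ →₀ ℕ} :
    (MonomialOrder.comb φ m m₂).toSyn a < (MonomialOrder.comb φ m m₂).toSyn b ↔
    m.toSyn (Finsupp.mapDomain φ a) < m.toSyn (Finsupp.mapDomain φ b) ∨
      (m.toSyn (Finsupp.mapDomain φ a) = m.toSyn (Finsupp.mapDomain φ b) ∧
        m₂.toSyn a < m₂.toSyn b) := by
  show combMap φ m m₂ a < combMap φ m m₂ b ↔ _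
  exact combMap_lt_iff φ m m₂

end Comb

section SetLemmas

open Set

variable {d : ℕ}

lemma castSucc_ne_last' (j : Fin d) : Fin.castSucc j ≠ Fin.last d :=
  (Fin.castSucc_lt_last j).ne

lemma last_not_mem_image (T : Set (Fin d)) : Fin.last d ∉ Fin.castSucc '' T := by
  rintro ⟨j, -, hj⟩
  exact castSucc_ne_last' j hj

lemma mem_image_castSucc {T : Set (Fin d)} {j : Fin d} :
    Fin.castSucc j ∈ Fin.castSucc '' T ↔ j ∈ T :=
  (Fin.castSucc_injective d).mem_set_image

lemma compl_image_castSucc (T : Set (Fin d)) :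
    univ \ (Fin.castSucc '' T) = Fin.castSucc '' (univ \ T) ∪ {Fin.last d} := by
  ext x
  induction x using Fin.lastCases with
  | last =>
      simp only [mem_diff, mem_univ, true_and, mem_union, mem_singleton_iff]
      constructor
      · intro _; right; trivial
      · intro _; exact last_not_mem_image T
  | cast j =>
      simp only [mem_diff, mem_univ, true_and, mem_union, mem_singleton_iff,
        mem_image_castSucc, castSucc_ne_last' j, or_false]

lemma compl_image_castSucc_union_last (T : Set (Fin d)) :
    univ \ (Fin.castSucc '' T ∪ {Fin.last d}) = Fin.castSucc '' (univ \ T) := by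
  ext x
  induction x using Fin.lastCases with
  | last =>
      simp only [mem_diff, mem_univ, true_and, mem_union, mem_singleton_iff]
      constructor
      · intro h; exact absurd (Or.inr trivial) h
      · intro h; exact absurd h (last_not_mem_image _)
  | cast j =>
      simp only [mem_diff, mem_univ, true_and, mem_union, mem_singleton_iff,
        mem_image_castSucc, castSucc_ne_last' j, or_false]

end SetLemmas

section BaseN

variable {d : ℕ} (M : Matroid (Fin d)) (c : Fin d) (M' : Matroid (Fin (d + 1)))

lemma baseN_iff (hE : M.E = Set.univ) (hE' : M'.E = Set.univ)
    (hM' : ∀ S : Set (Fin (d + 1)), M'.IsBase S ↔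
      ((∃ B : Set (Fin d), (M✶).IsBase B ∧ S = Fin.castSucc '' B ∪ {Fin.last d}) ∨
       (∃ B : Set (Fin d), (M✶).IsBase B ∧ c ∉ B ∧
          S = Fin.castSucc '' B ∪ {Fin.castSucc c})))
    (S : Set (Fin (d+1))) : (M'✶).IsBase S ↔
    (∃ A : Set (Fin d), M.IsBase A ∧ S = Fin.castSucc '' A) ∨
    (∃ A : Set (Fin d), M.IsBase A ∧ c ∈ A ∧
      S = Fin.castSucc '' (A \ {c}) ∪ {Fin.last d}) := by
  have hdual : ∀ B : Set (Fin d), (M✶).IsBase B ↔ M.IsBase (Set.univ \ B) := by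
    intro B
    rw [Matroid.dual_isBase_iff', hE]
    exact ⟨fun h => h.1, fun h => ⟨h, Set.subset_univ B⟩⟩
  rw [Matroid.dual_isBase_iff', hE', hM']
  have hSu : S ⊆ Set.univ := Set.subset_univ S
  simp only [hSu, and_true]
  constructor
  · rintro (⟨B, hB, hBS⟩ | ⟨B, hB, hcB, hBS⟩)
    · left
      refine ⟨Set.univ \ B, (hdual B).mp hB, ?_⟩
      have : Set.univ \ (Set.univ \ S) = S := Set.diff_diff_cancel_left hSu
      rw [← this, hBS, compl_image_castSucc_union_last]
    · right
      refine ⟨Set.univ \ B, (hdual B).mp hB, ⟨trivial, hcB⟩, ?_⟩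
      have h1 : Set.univ \ (Set.univ \ S) = S := Set.diff_diff_cancel_left hSu
      have h2 : Fin.castSucc '' B ∪ {Fin.castSucc c} = Fin.castSucc '' (B ∪ {c}) := by
        rw [Set.image_union, Set.image_singleton]
      rw [← h1, hBS, h2, compl_image_castSucc]
      congr 2
      ext x
      by_cases hx : x = c <;> simp [hx] <;> tauto
  · rintro (⟨A, hA, hAS⟩ | ⟨A, hA, hcA, hAS⟩)
    · left
      refine ⟨Set.univ \ A, (hdual _).mpr (by rwa [Set.diff_diff_cancel_left (Set.subset_univ A)]), ?_⟩
      rw [hAS, compl_image_castSucc]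
    · right
      refine ⟨Set.univ \ A, (hdual _).mpr (by rwa [Set.diff_diff_cancel_left (Set.subset_univ A)]),
        fun h => h.2 hcA, ?_⟩
      rw [hAS, compl_image_castSucc_union_last]
      have : Set.univ \ (A \ {c}) = (Set.univ \ A) ∪ {c} := by
        ext x
        by_cases hx : x = c <;> simp [hx] <;> tauto
      rw [this, Set.image_union, Set.image_singleton]
  
end BaseN

section Struct

open Finsupp

noncomputable def indF {X : Type} (s : Finset X) : X →₀ ℕ := ∑ l ∈ s, Finsupp.single l 1

lemma indF_apply {X : Type} [DecidableEq X] (s : Finset X) (x : X) :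
    indF s x = if x ∈ s then 1 else 0 := by
  classical
  rw [indF, Finsupp.finset_sum_apply]
  rw [Finset.sum_congr rfl (fun l _ => Finsupp.single_apply (a := l) (b := (1:ℕ)) (a' := x))]
  exact Finset.sum_ite_eq' s x (fun _ => 1)

lemma toricMap_X {α : Type} [Fintype α] [DecidableEq α] (K : Type) [Field K] (Mm : Matroid α)
    (b : {B : Finset α // Mm.IsBase ↑B}) :
    matroidToricMap K Mm (MvPolynomial.X b) = MvPolynomial.monomial (indF b.1) 1 := by
  rw [matroidToricMap, MvPolynomial.aeval_X]
  have h : ∀ l ∈ b.1, (MvPolynomial.X l : MvPolynomial α K)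
      = MvPolynomial.monomial (Finsupp.single l 1) 1 := fun l _ => rfl
  rw [Finset.prod_congr rfl h, prod_monomial_one, indF]

variable {d : ℕ} {M : Matroid (Fin d)} {c : Fin d} {M' : Matroid (Fin (d + 1))}

def femb (d : ℕ) : Fin d ↪ Fin (d+1) := ⟨Fin.castSucc, Fin.castSucc_injective d⟩

variable (hB : ∀ S : Set (Fin (d+1)), (M'✶).IsBase S ↔
    (∃ A : Set (Fin d), M.IsBase A ∧ S = Fin.castSucc '' A) ∨
    (∃ A : Set (Fin d), M.IsBase A ∧ c ∈ A ∧
      S = Fin.castSucc '' (A \ {c}) ∪ {Fin.last d}))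

noncomputable def xup (A : {B : Finset (Fin d) // M.IsBase ↑B}) :
    {B : Finset (Fin (d+1)) // (M'✶).IsBase ↑B} :=
  ⟨A.1.map (femb d), by
    apply (hB _).mpr
    left
    exact ⟨↑A.1, A.2, by rw [Finset.coe_map]; rfl⟩⟩

noncomputable def yup (A : {B : Finset (Fin d) // M.IsBase ↑B}) (hc : c ∈ A.1) :
    {B : Finset (Fin (d+1)) // (M'✶).IsBase ↑B} :=
  ⟨insert (Fin.last d) ((A.1.erase c).map (femb d)), by
    apply (hB _).mpr
    right
    refine ⟨↑A.1, A.2, hc, ?_⟩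
    rw [Finset.coe_insert, Finset.coe_map, Finset.coe_erase, Set.union_singleton]
    rfl⟩

lemma last_not_mem_map (s : Finset (Fin d)) : Fin.last d ∉ s.map (femb d) := by
  intro h
  rw [Finset.mem_map] at h
  obtain ⟨j, -, hj⟩ := h
  exact castSucc_ne_last' j hj

lemma xup_last (A : {B : Finset (Fin d) // M.IsBase ↑B}) :
    Fin.last d ∉ (xup hB A).1 := last_not_mem_map _

lemma yup_last (A : {B : Finset (Fin d) // M.IsBase ↑B}) (hc : c ∈ A.1) :
    Fin.last d ∈ (yup hB A hc).1 := Finset.mem_insert_self _ _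

lemma xup_inj {A A' : {B : Finset (Fin d) // M.IsBase ↑B}}
    (h : xup hB A = xup hB A') : A = A' := by
  apply Subtype.ext
  have := congrArg (fun z => z.1) h
  exact Finset.map_injective (femb d) this

lemma yup_inj {A A' : {B : Finset (Fin d) // M.IsBase ↑B}} {hc : c ∈ A.1} {hc' : c ∈ A'.1}
    (h : yup hB A hc = yup hB A' hc') : A = A' := by
  apply Subtype.ext
  have h1 := congrArg (fun z => z.1.erase (Fin.last d)) h
  simp only [yup] at h1
  rw [Finset.erase_insert (last_not_mem_map _), Finset.erase_insert (last_not_mem_map _)] at h1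
  have h2 := Finset.map_injective (femb d) h1
  have := congrArg (insert c) h2
  rwa [Finset.insert_erase hc, Finset.insert_erase hc'] at this

lemma zx (z : {B : Finset (Fin (d+1)) // (M'✶).IsBase ↑B}) (hl : Fin.last d ∉ z.1) :
    ∃ A : {B : Finset (Fin d) // M.IsBase ↑B}, z = xup hB A := by
  rcases (hB ↑z.1).mp z.2 with ⟨A, hA, hS⟩ | ⟨A, hA, hcA, hS⟩
  · refine ⟨⟨z.1.preimage Fin.castSucc ((Fin.castSucc_injective d).injOn), ?_⟩, ?_⟩
    · rwa [Finset.coe_preimage, hS, Set.preimage_image_eq _ (Fin.castSucc_injective d)]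
    · apply Subtype.ext
      apply Finset.coe_injective
      show (↑z.1 : Set (Fin (d+1))) = ↑((Finset.preimage z.1 Fin.castSucc
        ((Fin.castSucc_injective d).injOn)).map (femb d))
      rw [Finset.coe_map, Finset.coe_preimage, hS,
        Set.preimage_image_eq _ (Fin.castSucc_injective d)]
      rfl
  · exfalso
    apply hl
    rw [← Finset.mem_coe, hS]
    exact Or.inr rfl

lemma zy (z : {B : Finset (Fin (d+1)) // (M'✶).IsBase ↑B}) (hl : Fin.last d ∈ z.1) :
    ∃ (A : {B : Finset (Fin d) // M.IsBase ↑B}) (hc : c ∈ A.1), z = yup hB A hc := by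
  rcases (hB ↑z.1).mp z.2 with ⟨A, hA, hS⟩ | ⟨A, hA, hcA, hS⟩
  · exfalso
    apply last_not_mem_image A
    rw [← hS, Finset.mem_coe]
    exact hl
  · have herase : (↑(z.1.erase (Fin.last d)) : Set (Fin (d+1)))
        = Fin.castSucc '' (A \ {c}) := by
      rw [Finset.coe_erase, hS, Set.union_diff_distrib, Set.diff_self, Set.union_empty,
        Set.diff_singleton_eq_self (last_not_mem_image _)]
    have hAF : (↑(insert c ((z.1.erase (Fin.last d)).preimage Fin.castSucc
        ((Fin.castSucc_injective d).injOn))) : Set (Fin d)) = A := by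
      rw [Finset.coe_insert, Finset.coe_preimage, herase,
        Set.preimage_image_eq _ (Fin.castSucc_injective d), Set.insert_diff_singleton,
        Set.insert_eq_self]
      exact hcA
    refine ⟨⟨insert c ((z.1.erase (Fin.last d)).preimage Fin.castSucc
        ((Fin.castSucc_injective d).injOn)), by rwa [hAF]⟩,
      Finset.mem_insert_self _ _, ?_⟩
    apply Subtype.ext
    apply Finset.coe_injective
    show (↑z.1 : Set (Fin (d+1))) = ↑(insert (Fin.last d)
      (((insert c ((z.1.erase (Fin.last d)).preimage Fin.castSucc
        ((Fin.castSucc_injective d).injOn))).erase c).map (femb d)))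
    rw [Finset.coe_insert, Finset.coe_map, Finset.coe_erase, hAF, hS, Set.union_singleton]
    rfl

noncomputable def phiN (z : {B : Finset (Fin (d+1)) // (M'✶).IsBase ↑B}) :
    {B : Finset (Fin d) // M.IsBase ↑B} :=
  if hl : Fin.last d ∈ z.1 then (zy hB z hl).choose
  else (zx hB z hl).choose

lemma phiN_spec_x (z : {B : Finset (Fin (d+1)) // (M'✶).IsBase ↑B}) (hl : Fin.last d ∉ z.1) :
    z = xup hB (phiN hB z) := by
  rw [phiN, dif_neg hl]
  exact (zx hB z hl).choose_spec

lemma phiN_spec_y (z : {B : Finset (Fin (d+1)) // (M'✶).IsBase ↑B}) (hl : Fin.last d ∈ z.1) :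
    ∃ hc : c ∈ (phiN hB z).1, z = yup hB (phiN hB z) hc := by
  rw [phiN, dif_pos hl]
  exact (zy hB z hl).choose_spec

lemma phiN_xup (A : {B : Finset (Fin d) // M.IsBase ↑B}) : phiN hB (xup hB A) = A := by
  have h := phiN_spec_x hB (xup hB A) (xup_last hB A)
  exact (xup_inj hB h.symm)

lemma phiN_yup (A : {B : Finset (Fin d) // M.IsBase ↑B}) (hc : c ∈ A.1) :
    phiN hB (yup hB A hc) = A := by
  obtain ⟨hc', h⟩ := phiN_spec_y hB (yup hB A hc) (yup_last hB A hc)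
  exact (yup_inj hB h.symm)

lemma phiN_mem_c (z : {B : Finset (Fin (d+1)) // (M'✶).IsBase ↑B}) (hl : Fin.last d ∈ z.1) :
    c ∈ (phiN hB z).1 := (phiN_spec_y hB z hl).choose

end Struct

section Evec

open Finsupp

lemma fle {X : Type} {u v : X →₀ ℕ} : u ≤ v ↔ ∀ x, u x ≤ v x := by
  constructor
  · intro h x
    by_cases hx : x ∈ u.support
    · exact (Finsupp.le_iff u v).mp h x hx
    · rw [Finsupp.notMem_support_iff.mp hx]; exact Nat.zero_le _
  · intro h
    exact (Finsupp.le_iff u v).mpr fun x _ => h x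

variable {d : ℕ} {M : Matroid (Fin d)} {c : Fin d} {M' : Matroid (Fin (d + 1))}
variable (hB : ∀ S : Set (Fin (d+1)), (M'✶).IsBase S ↔
    (∃ A : Set (Fin d), M.IsBase A ∧ S = Fin.castSucc '' A) ∨
    (∃ A : Set (Fin d), M.IsBase A ∧ c ∈ A ∧
      S = Fin.castSucc '' (A \ {c}) ∪ {Fin.last d}))

lemma indF_map (s : Finset (Fin d)) :
    indF (s.map (femb d)) = Finsupp.mapDomain Fin.castSucc (indF s) := by
  rw [indF, indF, Finset.sum_map]
  have h := map_sum (Finsupp.mapDomain.addMonoidHom (Fin.castSucc : Fin d → Fin (d+1)))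
    (fun l => Finsupp.single l (1:ℕ)) s
  simp only [Finsupp.mapDomain.addMonoidHom_apply] at h
  rw [h]
  exact Finset.sum_congr rfl fun l _ => by rw [Finsupp.mapDomain_single]; rfl

lemma eN_xup (A : {B : Finset (Fin d) // M.IsBase ↑B}) :
    indF (xup hB A).1 = Finsupp.mapDomain Fin.castSucc (indF A.1) := indF_map A.1

lemma eN_yup (A : {B : Finset (Fin d) // M.IsBase ↑B}) (hc : c ∈ A.1) :
    indF (yup hB A hc).1 + Finsupp.single (Fin.castSucc c) 1
      = Finsupp.mapDomain Fin.castSucc (indF A.1) + Finsupp.single (Fin.last d) 1 := by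
  classical
  show indF (insert (Fin.last d) ((A.1.erase c).map (femb d))) + _ = _
  rw [indF, Finset.sum_insert (last_not_mem_map _), ← indF, indF_map]
  have h1 : indF (A.1.erase c) + Finsupp.single c 1 = indF A.1 := by
    rw [indF, indF, Finset.sum_erase_add A.1 _ hc]
  have h2 := congrArg (Finsupp.mapDomain (Fin.castSucc : Fin d → Fin (d+1))) h1
  rw [Finsupp.mapDomain_add, Finsupp.mapDomain_single] at h2
  rw [← h2]
  abel

lemma MI1 (z : {B : Finset (Fin (d+1)) // (M'✶).IsBase ↑B}) :
    indF z.1 + (indF z.1 (Fin.last d)) • Finsupp.single (Fin.castSucc c) 1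
      = Finsupp.mapDomain Fin.castSucc (indF (phiN hB z).1)
        + (indF z.1 (Fin.last d)) • Finsupp.single (Fin.last d) 1 := by
  classical
  by_cases hl : Fin.last d ∈ z.1
  · obtain ⟨hc, hz⟩ := phiN_spec_y hB z hl
    rw [indF_apply, if_pos hl, one_smul, one_smul]
    have key := eN_yup hB (phiN hB z) hc
    rw [← hz] at key
    exact key
  · rw [indF_apply, if_neg hl, zero_smul, zero_smul, add_zero, add_zero]
    have key := eN_xup hB (phiN hB z)
    rw [← phiN_spec_x hB z hl] at key
    exact key

lemma MI (a : {B : Finset (Fin (d+1)) // (M'✶).IsBase ↑B} →₀ ℕ) :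
    eSum (fun z => indF z.1) a
      + ((eSum (fun z => indF z.1) a) (Fin.last d)) • Finsupp.single (Fin.castSucc c) 1
      = Finsupp.mapDomain Fin.castSucc
          (eSum (fun A => indF A.1) (Finsupp.mapDomain (phiN hB) a))
        + ((eSum (fun z => indF z.1) a) (Fin.last d)) • Finsupp.single (Fin.last d) 1 := by
  classical
  induction a using Finsupp.induction with
  | zero => simp [eSum]
  | single_add z n f hzf hn ih =>
      rw [eSum_add, Finsupp.mapDomain_add, eSum_add, eSum_single, Finsupp.mapDomain_single,
        eSum_single, Finsupp.add_apply]
      have h2 : n • indF z.1 + ((n • indF z.1) (Fin.last d)) • Finsupp.single (Fin.castSucc c) 1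
          = Finsupp.mapDomain Fin.castSucc (n • indF (phiN hB z).1)
            + ((n • indF z.1) (Fin.last d)) • Finsupp.single (Fin.last d) 1 := by
        have h1 := congrArg (fun x => n • x) (MI1 hB z)
        simp only [smul_add, smul_smul] at h1
        rw [Finsupp.mapDomain_smul]
        simpa [Finsupp.smul_apply, smul_smul] using h1
      calc n • indF z.1 + eSum (fun z => indF z.1) f
            + (((n • indF z.1) (Fin.last d)) + (eSum (fun z => indF z.1) f) (Fin.last d))
              • Finsupp.single (Fin.castSucc c) 1
          = (n • indF z.1 + ((n • indF z.1) (Fin.last d)) • Finsupp.single (Fin.castSucc c) 1)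
            + (eSum (fun z => indF z.1) f
              + ((eSum (fun z => indF z.1) f) (Fin.last d))
                • Finsupp.single (Fin.castSucc c) 1) := by
            rw [add_smul]; abel
        _ = (Finsupp.mapDomain Fin.castSucc (n • indF (phiN hB z).1)
              + ((n • indF z.1) (Fin.last d)) • Finsupp.single (Fin.last d) 1)
            + (Finsupp.mapDomain Fin.castSucc
                (eSum (fun A => indF A.1) (Finsupp.mapDomain (phiN hB) f))
              + ((eSum (fun z => indF z.1) f) (Fin.last d))
                • Finsupp.single (Fin.last d) 1) := by rw [h2, ih]
        _ = _ := by
            rw [Finsupp.mapDomain_add, add_smul]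
            abel

lemma xy_ne (A A' : {B : Finset (Fin d) // M.IsBase ↑B}) (hc' : c ∈ A'.1) :
    xup hB A ≠ yup hB A' hc' := by
  intro h
  apply xup_last hB A
  rw [h]
  exact yup_last hB A' hc'

lemma FF (a : {B : Finset (Fin (d+1)) // (M'✶).IsBase ↑B} →₀ ℕ)
    (A : {B : Finset (Fin d) // M.IsBase ↑B}) :
    Finsupp.mapDomain (phiN hB) a A
      = a (xup hB A) + (if hc : c ∈ A.1 then a (yup hB A hc) else 0) := by
  classical
  rw [Finsupp.mapDomain, Finsupp.sum_apply, Finsupp.sum]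
  rw [Finset.sum_congr rfl (fun z _ => Finsupp.single_apply)]
  rw [← Finset.sum_filter]
  by_cases hc : c ∈ A.1
  · rw [dif_pos hc]
    have hne := xy_ne hB A A hc
    have hsub : a.support.filter (fun z => phiN hB z = A) ⊆ {xup hB A, yup hB A hc} := by
      intro z hz
      rw [Finset.mem_filter] at hz
      rw [Finset.mem_insert, Finset.mem_singleton]
      by_cases hl : Fin.last d ∈ z.1
      · right
        obtain ⟨hc2, hz2⟩ := phiN_spec_y hB z hl
        rw [hz2]
        have : phiN hB z = A := hz.2
        subst this
        rfl
      · left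
        rw [phiN_spec_x hB z hl, hz.2]
    rw [Finset.sum_subset hsub ?_]
    · rw [Finset.sum_pair hne]
    · intro z hz hz2
      by_contra haz
      apply hz2
      rw [Finset.mem_filter]
      refine ⟨Finsupp.mem_support_iff.mpr haz, ?_⟩
      rw [Finset.mem_insert, Finset.mem_singleton] at hz
      rcases hz with rfl | rfl
      · exact phiN_xup hB A
      · exact phiN_yup hB A hc
  · rw [dif_neg hc, add_zero]
    have hsub : a.support.filter (fun z => phiN hB z = A) ⊆ {xup hB A} := by
      intro z hz
      rw [Finset.mem_filter] at hz
      rw [Finset.mem_singleton]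
      by_cases hl : Fin.last d ∈ z.1
      · exact absurd (hz.2 ▸ phiN_mem_c hB z hl) hc
      · rw [phiN_spec_x hB z hl, hz.2]
    rw [Finset.sum_subset hsub ?_]
    · rw [Finset.sum_singleton]
    · intro z hz hz2
      by_contra haz
      apply hz2
      rw [Finset.mem_filter]
      refine ⟨Finsupp.mem_support_iff.mpr haz, ?_⟩
      rw [Finset.mem_singleton] at hz
      subst hz
      exact phiN_xup hB A

end Evec

section Deco

open Finsupp

variable {d : ℕ} {M : Matroid (Fin d)} {c : Fin d} {M' : Matroid (Fin (d + 1))}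
variable (hB : ∀ S : Set (Fin (d+1)), (M'✶).IsBase S ↔
    (∃ A : Set (Fin d), M.IsBase A ∧ S = Fin.castSucc '' A) ∨
    (∃ A : Set (Fin d), M.IsBase A ∧ c ∈ A ∧
      S = Fin.castSucc '' (A \ {c}) ∪ {Fin.last d}))

lemma proj_eq {a b : {B : Finset (Fin (d+1)) // (M'✶).IsBase ↑B} →₀ ℕ}
    (h : eSum (fun z => indF z.1) a = eSum (fun z => indF z.1) b) :
    eSum (fun A => indF A.1) (Finsupp.mapDomain (phiN hB) a)
      = eSum (fun A => indF A.1) (Finsupp.mapDomain (phiN hB) b) := by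
  have h1 := MI hB a
  have h2 := MI hB b
  rw [h] at h1
  have h3 := h1.symm.trans h2
  have h4 := add_right_cancel h3
  exact Finsupp.mapDomain_injective (Fin.castSucc_injective d) h4

lemma eN_eq_of {a b : {B : Finset (Fin (d+1)) // (M'✶).IsBase ↑B} →₀ ℕ}
    (h1 : eSum (fun A => indF A.1) (Finsupp.mapDomain (phiN hB) a)
      = eSum (fun A => indF A.1) (Finsupp.mapDomain (phiN hB) b))
    (h2 : (eSum (fun z => indF z.1) a) (Fin.last d)
      = (eSum (fun z => indF z.1) b) (Fin.last d)) :
    eSum (fun z => indF z.1) a = eSum (fun z => indF z.1) b := by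
  have m1 := MI hB a
  have m2 := MI hB b
  rw [h1, h2] at m1
  have h3 := m1.trans m2.symm
  exact add_right_cancel h3

lemma fiber_ge_one {a : {B : Finset (Fin (d+1)) // (M'✶).IsBase ↑B} →₀ ℕ}
    {A : {B : Finset (Fin d) // M.IsBase ↑B}}
    (h : 1 ≤ Finsupp.mapDomain (phiN hB) a A) :
    ∃ z, phiN hB z = A ∧ 1 ≤ a z := by
  classical
  rw [FF hB] at h
  by_cases hx : 1 ≤ a (xup hB A)
  · exact ⟨xup hB A, phiN_xup hB A, hx⟩
  · by_cases hc : c ∈ A.1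
    · rw [dif_pos hc] at h
      exact ⟨yup hB A hc, phiN_yup hB A hc, by omega⟩
    · rw [dif_neg hc] at h
      omega

lemma pair_le {X : Type} {a : X →₀ ℕ} {z w : X} (hzw : z ≠ w)
    (hz : 1 ≤ a z) (hw : 1 ≤ a w) : Finsupp.single z 1 + Finsupp.single w 1 ≤ a := by
  classical
  rw [fle]
  intro x
  simp only [Finsupp.add_apply, Finsupp.single_apply]
  by_cases hxz : z = x
  · subst hxz
    rw [if_pos rfl, if_neg (Ne.symm hzw)]
    omega
  · by_cases hxw : w = x
    · subst hxw
      rw [if_neg hxz, if_pos rfl]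
      omega
    · rw [if_neg hxz, if_neg hxw]
      omega

lemma double_le {X : Type} {a : X →₀ ℕ} {z : X} (hz : 2 ≤ a z) :
    Finsupp.single z 1 + Finsupp.single z 1 ≤ a := by
  classical
  rw [fle]
  intro x
  simp only [Finsupp.add_apply, Finsupp.single_apply]
  by_cases hxz : z = x
  · subst hxz; rw [if_pos rfl]; omega
  · rw [if_neg hxz]; omega

lemma deco_exists {a : {B : Finset (Fin (d+1)) // (M'✶).IsBase ↑B} →₀ ℕ}
    {i j : {B : Finset (Fin d) // M.IsBase ↑B}}
    (h : Finsupp.single i 1 + Finsupp.single j 1 ≤ Finsupp.mapDomain (phiN hB) a) :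
    ∃ i' j', phiN hB i' = i ∧ phiN hB j' = j ∧
      Finsupp.single i' 1 + Finsupp.single j' 1 ≤ a := by
  classical
  by_cases hij : i = j
  · subst hij
    have h2 : 2 ≤ Finsupp.mapDomain (phiN hB) a i := by
      have := fle.mp h i
      simp only [Finsupp.add_apply, Finsupp.single_apply, if_true] at this
      omega
    rw [FF hB] at h2
    by_cases hc : c ∈ i.1
    · rw [dif_pos hc] at h2
      by_cases hx2 : 2 ≤ a (xup hB i)
      · exact ⟨xup hB i, xup hB i, phiN_xup hB i, phiN_xup hB i, double_le hx2⟩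
      · by_cases hx1 : 1 ≤ a (xup hB i)
        · exact ⟨xup hB i, yup hB i hc, phiN_xup hB i, phiN_yup hB i hc,
            pair_le (xy_ne hB i i hc) hx1 (by omega)⟩
        · exact ⟨yup hB i hc, yup hB i hc, phiN_yup hB i hc, phiN_yup hB i hc,
            double_le (by omega)⟩
    · rw [dif_neg hc] at h2
      exact ⟨xup hB i, xup hB i, phiN_xup hB i, phiN_xup hB i, double_le (by omega)⟩
  · have hi : 1 ≤ Finsupp.mapDomain (phiN hB) a i := by
      have := fle.mp h i
      simp only [Finsupp.add_apply, Finsupp.single_apply, if_true] at this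
      rw [if_neg (fun hh : j = i => hij hh.symm)] at this
      omega
    have hj : 1 ≤ Finsupp.mapDomain (phiN hB) a j := by
      have := fle.mp h j
      simp only [Finsupp.add_apply, Finsupp.single_apply, if_true] at this
      rw [if_neg hij] at this
      omega
    obtain ⟨i', hi1, hi2⟩ := fiber_ge_one hB hi
    obtain ⟨j', hj1, hj2⟩ := fiber_ge_one hB hj
    have hne : i' ≠ j' := fun hh => hij (by rw [← hi1, ← hj1, hh])
    exact ⟨i', j', hi1, hj1, pair_le hne hi2 hj2⟩

lemma trail_deco (k l : {B : Finset (Fin d) // M.IsBase ↑B}) (t : ℕ)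
    (ht : t ≤ (if c ∈ k.1 then 1 else 0) + (if c ∈ l.1 then 1 else 0)) :
    ∃ k' l', phiN hB k' = k ∧ phiN hB l' = l ∧
      ((if Fin.last d ∈ k'.1 then 1 else 0) + (if Fin.last d ∈ l'.1 then 1 else 0) : ℕ) = t := by
  classical
  have ht2 : t ≤ 2 := by
    rcases Nat.le_total t 2 with h | h
    · exact h
    · by_cases h1 : c ∈ k.1 <;> by_cases h2 : c ∈ l.1 <;> simp [h1, h2] at ht <;> omega
  interval_cases t
  · exact ⟨xup hB k, xup hB l, phiN_xup hB k, phiN_xup hB l,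
      by rw [if_neg (xup_last hB k), if_neg (xup_last hB l)]⟩
  · by_cases hck : c ∈ k.1
    · exact ⟨yup hB k hck, xup hB l, phiN_yup hB k hck, phiN_xup hB l,
        by rw [if_pos (yup_last hB k hck), if_neg (xup_last hB l)]⟩
    · have hcl : c ∈ l.1 := by
        by_contra hcl
        rw [if_neg hck, if_neg hcl] at ht
        omega
      exact ⟨xup hB k, yup hB l hcl, phiN_xup hB k, phiN_yup hB l hcl,
        by rw [if_neg (xup_last hB k), if_pos (yup_last hB l hcl)]⟩
  · have hck : c ∈ k.1 := by
      by_contra hck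
      rw [if_neg hck] at ht
      have : (if c ∈ l.1 then 1 else 0) ≤ 1 := by split <;> omega
      omega
    have hcl : c ∈ l.1 := by
      by_contra hcl
      rw [if_neg hcl] at ht
      have : (if c ∈ k.1 then 1 else 0) ≤ 1 := by split <;> omega
      omega
    exact ⟨yup hB k hck, yup hB l hcl, phiN_yup hB k hck, phiN_yup hB l hcl,
      by rw [if_pos (yup_last hB k hck), if_pos (yup_last hB l hcl)]⟩

lemma eSum_pair {X Y : Type} (e : X → (Y →₀ ℕ)) (z w : X) :
    eSum e (Finsupp.single z 1 + Finsupp.single w 1) = e z + e w := by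
  rw [eSum_add, eSum_single, eSum_single, one_smul, one_smul]

lemma pd_pair {X Y : Type} (f : X → Y) (z w : X) :
    Finsupp.mapDomain f (Finsupp.single z 1 + Finsupp.single w 1)
      = Finsupp.single (f z) 1 + Finsupp.single (f w) 1 := by
  rw [Finsupp.mapDomain_add, Finsupp.mapDomain_single, Finsupp.mapDomain_single]

end Deco

section Ord

open Finsupp

noncomputable def finLO (α : Type) [Finite α] : LinearOrder α :=
  letI := Fintype.ofFinite α
  LinearOrder.lift' (Fintype.equivFin α) (Equiv.injective _)

variable {d : ℕ} {M : Matroid (Fin d)} {c : Fin d} {M' : Matroid (Fin (d + 1))}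
variable (hB : ∀ S : Set (Fin (d+1)), (M'✶).IsBase S ↔
    (∃ A : Set (Fin d), M.IsBase A ∧ S = Fin.castSucc '' A) ∨
    (∃ A : Set (Fin d), M.IsBase A ∧ c ∈ A ∧
      S = Fin.castSucc '' (A \ {c}) ∪ {Fin.last d}))

noncomputable def linM (M : Matroid (Fin d)) : LinearOrder {B : Finset (Fin d) // M.IsBase ↑B} :=
  finLO _

lemma yup_eq_of {A A' : {B : Finset (Fin d) // M.IsBase ↑B}} (h : A = A')
    {hc : c ∈ A.1} {hc' : c ∈ A'.1} : yup hB A hc = yup hB A' hc' := by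
  subst h; rfl

/-- the order-defining map on decorated bases -/
noncomputable def psiN (z : {B : Finset (Fin (d+1)) // (M'✶).IsBase ↑B}) :
    Lex ({B : Finset (Fin d) // M.IsBase ↑B} × Bool) :=
  toLex (phiN hB z, decide (Fin.last d ∈ z.1))

lemma psiN_inj : Function.Injective (psiN hB) := by
  intro z w h
  have h1 : phiN hB z = phiN hB w := congrArg (fun x => (ofLex x).1) h
  have h2 : decide (Fin.last d ∈ z.1) = decide (Fin.last d ∈ w.1) :=
    congrArg (fun x => (ofLex x).2) h
  rw [decide_eq_decide] at h2
  by_cases hl : Fin.last d ∈ z.1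
  · have hl' : Fin.last d ∈ w.1 := h2.mp hl
    obtain ⟨hc, hz⟩ := phiN_spec_y hB z hl
    obtain ⟨hc', hw⟩ := phiN_spec_y hB w hl'
    rw [hz, hw]
    exact yup_eq_of hB h1
  · have hl' : Fin.last d ∉ w.1 := fun hh => hl (h2.mpr hh)
    rw [phiN_spec_x hB z hl, phiN_spec_x hB w hl', h1]

noncomputable def linN : LinearOrder {B : Finset (Fin (d+1)) // (M'✶).IsBase ↑B} :=
  letI := linM M
  LinearOrder.lift' (psiN hB) (psiN_inj hB)

noncomputable def m2 : MonomialOrder.{0,0} {B : Finset (Fin (d+1)) // (M'✶).IsBase ↑B} :=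
  letI lo := linN hB
  haveI fin : Finite {B : Finset (Fin (d+1)) // (M'✶).IsBase ↑B} := Subtype.finite
  @MonomialOrder.lex _ lo (@Finite.to_wellFoundedGT _ fin lo.toPartialOrder.toPreorder)

/-- the canonical strict order on bases of `M` -/
noncomputable def LMlt (M : Matroid (Fin d)) (x y : {B : Finset (Fin d) // M.IsBase ↑B}) : Prop :=
  @LT.lt _ (linM M).toPartialOrder.toPreorder.toLT x y

/-- the canonical strict order on bases of `M'✶` -/
noncomputable def LNlt (z w : {B : Finset (Fin (d+1)) // (M'✶).IsBase ↑B}) : Prop :=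
  @LT.lt _ (linN hB).toPartialOrder.toPreorder.toLT z w

lemma LMlt_tricho (x y : {B : Finset (Fin d) // M.IsBase ↑B}) :
    LMlt M x y ∨ x = y ∨ LMlt M y x := by
  letI := linM M
  exact lt_trichotomy x y

lemma LNlt_phi {z w : {B : Finset (Fin (d+1)) // (M'✶).IsBase ↑B}}
    (h : LMlt M (phiN hB z) (phiN hB w)) : LNlt hB z w :=
  Prod.Lex.left _ _ h

lemma LNlt_flag {z w : {B : Finset (Fin (d+1)) // (M'✶).IsBase ↑B}}
    (hphi : phiN hB z = phiN hB w) (hz : Fin.last d ∉ z.1) (hw : Fin.last d ∈ w.1) :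
    LNlt hB z w := by
  show Prod.Lex (@LT.lt _ (linM M).toPartialOrder.toPreorder.toLT) (@LT.lt Bool _)
      (phiN hB z, decide (Fin.last d ∈ z.1)) (phiN hB w, decide (Fin.last d ∈ w.1))
  rw [decide_eq_false_iff_not.mpr hz, decide_eq_true_eq.mpr hw, hphi]
  exact Prod.Lex.right _ (by exact Bool.false_lt_true)

lemma LNlt_asymm {z w : {B : Finset (Fin (d+1)) // (M'✶).IsBase ↑B}}
    (h : LNlt hB z w) (h' : LNlt hB w z) : False :=
  absurd h' (@lt_asymm _ (linN hB).toPartialOrder.toPreorder z w h)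

lemma LNlt_irrefl {z : {B : Finset (Fin (d+1)) // (M'✶).IsBase ↑B}}
    (h : LNlt hB z z) : False :=
  @lt_irrefl _ (linN hB).toPartialOrder.toPreorder z h

end Ord


section Final

open Finsupp

lemma X_mul_X {σ K : Type} [Field K] (i j : σ) :
    (MvPolynomial.X i * MvPolynomial.X j : MvPolynomial σ K)
      = MvPolynomial.monomial (Finsupp.single i 1 + Finsupp.single j 1) 1 := by
  rw [MvPolynomial.X, MvPolynomial.X, MvPolynomial.monomial_mul, one_mul]

lemma eS_last {d : ℕ} {M' : Matroid (Fin (d + 1))}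
    [Fintype {B : Finset (Fin (d+1)) // (M'✶).IsBase ↑B}]
    (a : {B : Finset (Fin (d+1)) // (M'✶).IsBase ↑B} →₀ ℕ) :
    (eSum (fun z : {B : Finset (Fin (d+1)) // (M'✶).IsBase ↑B} => indF z.1) a) (Fin.last d)
      = ∑ z ∈ Finset.univ, if Fin.last d ∈ z.1 then a z else 0 := by
  classical
  rw [eSum, Finsupp.sum, Finsupp.finset_sum_apply]
  have hterm : ∀ z ∈ a.support,
      (a z • indF z.1) (Fin.last d) = if Fin.last d ∈ z.1 then a z else 0 := by
    intro z _
    rw [Finsupp.smul_apply, indF_apply, smul_eq_mul, mul_ite, mul_one, mul_zero]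
  rw [Finset.sum_congr rfl hterm]
  apply Finset.sum_subset (Finset.subset_univ _)
  intro z _ hz
  rw [Finsupp.notMem_support_iff.mp hz]
  simp

/-- If the toric ideal of `M` has a quadratic Gröbner basis, then so does the toric ideal
of the parallel extension `(M✶ +_c (d+1))✶` of `M` at `c` by `d+1`; here `M'` is the series
extension `M✶ +_c (d+1)` of the dual matroid. -/
theorem statement9 (K : Type) [Field K] {d : ℕ}
    (M : Matroid (Fin d)) (hE : M.E = Set.univ) (c : Fin d)
    (M' : Matroid (Fin (d + 1))) (hE' : M'.E = Set.univ)
    (hM' : ∀ S : Set (Fin (d + 1)), M'.IsBase S ↔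
      ((∃ B : Set (Fin d), (M✶).IsBase B ∧ S = Fin.castSucc '' B ∪ {Fin.last d}) ∨
       (∃ B : Set (Fin d), (M✶).IsBase B ∧ c ∉ B ∧
          S = Fin.castSucc '' B ∪ {Fin.castSucc c})))
    (h : HasQuadraticGroebnerBasis (matroidToricIdeal K M)) :
    HasQuadraticGroebnerBasis (matroidToricIdeal K (M'✶)) := by
  classical
  obtain ⟨mM, G, hquad, hGB⟩ := h
  have hB := baseN_iff M c M' hE hE' hM'
  letI linMi : LinearOrder {B : Finset (Fin d) // M.IsBase ↑B} := linM M
  letI linNi : LinearOrder {B : Finset (Fin (d+1)) // (M'✶).IsBase ↑B} := linN hB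
  letI finN : Fintype {B : Finset (Fin (d+1)) // (M'✶).IsBase ↑B} := Fintype.ofFinite _
  have hπM : ∀ z, matroidToricMap K M (MvPolynomial.X z)
      = MvPolynomial.monomial (indF z.1) (1:K) := toricMap_X K M
  have hπN : ∀ z, matroidToricMap K (M'✶) (MvPolynomial.X z)
      = MvPolynomial.monomial (indF z.1) (1:K) := toricMap_X K (M'✶)
  have hGB' : IsGroebnerBasis mM (RingHom.ker (matroidToricMap K M).toRingHom) G := hGB
  have HM := fiber_of_isGB mM hπM hGB'
  -- structure of the quadratic binomials in G
  have hstruct : ∀ g ∈ G, ∃ (i j k l : {B : Finset (Fin d) // M.IsBase ↑B}),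
      mLeadExp mM g = Finsupp.single i 1 + Finsupp.single j 1 ∧
      mM.toSyn (Finsupp.single k 1 + Finsupp.single l 1)
        < mM.toSyn (Finsupp.single i 1 + Finsupp.single j 1) ∧
      indF i.1 + indF j.1 = indF k.1 + indF l.1 := by
    intro g hg
    obtain ⟨i0, j0, k0, l0, hgeq⟩ := hquad g hg
    have hg0 : g ≠ 0 := fun hh => hGB.2.1 (hh ▸ hg)
    have hker : matroidToricMap K M g = 0 := hGB.1 hg
    rw [hgeq, X_mul_X, X_mul_X] at hker
    rw [map_sub, pi_monomial _ hπM, pi_monomial _ hπM] at hker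
    have hmm := sub_eq_zero.mp hker
    have hesum : eSum (fun A => indF A.1) (Finsupp.single i0 1 + Finsupp.single j0 1)
        = eSum (fun A => indF A.1) (Finsupp.single k0 1 + Finsupp.single l0 1) := by
      rcases (MvPolynomial.monomial_eq_monomial_iff _ _ _ _).mp hmm with ⟨h1, -⟩ | ⟨h1, -⟩
      · exact h1
      · exact absurd h1 one_ne_zero
    have hind : indF i0.1 + indF j0.1 = indF k0.1 + indF l0.1 := by
      have := hesum
      rwa [eSum_pair, eSum_pair] at this
    have huv : (Finsupp.single i0 1 + Finsupp.single j0 1 : _ →₀ ℕ)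
        ≠ Finsupp.single k0 1 + Finsupp.single l0 1 := by
      intro hh
      apply hg0
      rw [hgeq, X_mul_X, X_mul_X, hh, sub_self]
    rcases lt_trichotomy (mM.toSyn (Finsupp.single i0 1 + Finsupp.single j0 1))
        (mM.toSyn (Finsupp.single k0 1 + Finsupp.single l0 1)) with hlt | heq | hgt
    · refine ⟨k0, l0, i0, j0, ?_, hlt, hind.symm⟩
      rw [hgeq, X_mul_X, X_mul_X,
        show (MvPolynomial.monomial (Finsupp.single i0 1 + Finsupp.single j0 1) (1:K)
          - MvPolynomial.monomial (Finsupp.single k0 1 + Finsupp.single l0 1) 1)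
          = -(MvPolynomial.monomial (Finsupp.single k0 1 + Finsupp.single l0 1) 1
            - MvPolynomial.monomial (Finsupp.single i0 1 + Finsupp.single j0 1) 1) by ring]
      rw [mLeadExp_neg]
      exact mLeadExp_binomial mM hlt
    · exact absurd (mM.toSyn.injective heq) huv
    · refine ⟨i0, j0, k0, l0, ?_, hgt, hind⟩
      rw [hgeq, X_mul_X, X_mul_X]
      exact mLeadExp_binomial mM hgt
  set mC := MonomialOrder.comb (phiN hB) mM (m2 hB) with hmC
  set eN : {B : Finset (Fin (d+1)) // (M'✶).IsBase ↑B} → (Fin (d+1) →₀ ℕ) :=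
    fun z => indF z.1 with heN
  set G' : Set (MvPolynomial {B : Finset (Fin (d+1)) // (M'✶).IsBase ↑B} K) :=
    {f | ∃ i' j' k' l', f = MvPolynomial.monomial (Finsupp.single i' 1 + Finsupp.single j' 1) 1
        - MvPolynomial.monomial (Finsupp.single k' 1 + Finsupp.single l' 1) 1 ∧
      eSum eN (Finsupp.single i' 1 + Finsupp.single j' 1)
        = eSum eN (Finsupp.single k' 1 + Finsupp.single l' 1) ∧
      mC.toSyn (Finsupp.single k' 1 + Finsupp.single l' 1)
        < mC.toSyn (Finsupp.single i' 1 + Finsupp.single j' 1)} with hG'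
  refine ⟨mC, G', ?_, ?_⟩
  · rintro f ⟨i', j', k', l', rfl, -, -⟩
    exact ⟨i', j', k', l', by rw [X_mul_X, X_mul_X]⟩
  · show IsGroebnerBasis mC (RingHom.ker (matroidToricMap K (M'✶)).toRingHom) G'
    apply isGB_of_fiber mC eN (matroidToricMap K (M'✶)) hπN
    · rintro f ⟨i', j', k', l', rfl, he, -⟩
      have : matroidToricMap K (M'✶)
          (MvPolynomial.monomial (Finsupp.single i' 1 + Finsupp.single j' 1) (1:K)
            - MvPolynomial.monomial (Finsupp.single k' 1 + Finsupp.single l' 1) 1) = 0 := by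
        rw [map_sub, pi_monomial _ hπN, pi_monomial _ hπN, he, sub_self]
      exact this
    · rintro ⟨i', j', k', l', h0, -, hlt⟩
      have hne : (Finsupp.single i' 1 + Finsupp.single j' 1 : _ →₀ ℕ)
          ≠ Finsupp.single k' 1 + Finsupp.single l' 1 := by
        intro hh
        rw [hh] at hlt
        exact lt_irrefl _ hlt
      exact binomial_ne_zero hne h0.symm
    · -- the fiber condition
      intro a b hesum hlt
      have hklast : (eSum eN a) (Fin.last d) = (eSum eN b) (Fin.last d) := by rw [hesum]
      have hproj := proj_eq hB hesum
      rcases (comb_toSyn_lt_iff (phiN hB) mM (m2 hB)).mp hlt with hPD | ⟨hPDeq, hlt2⟩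
      · -- case 1 : projections differ
        obtain ⟨g, hgG, hgle⟩ := HM (Finsupp.mapDomain (phiN hB) a)
          (Finsupp.mapDomain (phiN hB) b) hproj hPD
        obtain ⟨i, j, k, l, hlead, hstrict, hind⟩ := hstruct g hgG
        rw [hlead] at hgle
        obtain ⟨i', j', hpi, hpj, hle_a⟩ := deco_exists hB hgle
        have hcc : ((if Fin.last d ∈ i'.1 then 1 else 0)
            + (if Fin.last d ∈ j'.1 then 1 else 0) : ℕ)
            ≤ (if c ∈ k.1 then 1 else 0) + (if c ∈ l.1 then 1 else 0) := by
          have h1 : ((if Fin.last d ∈ i'.1 then 1 else 0) : ℕ)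
              ≤ if c ∈ i.1 then 1 else 0 := by
            by_cases hl : Fin.last d ∈ i'.1
            · rw [if_pos hl, if_pos (hpi ▸ phiN_mem_c hB i' hl)]
            · rw [if_neg hl]; omega
          have h2 : ((if Fin.last d ∈ j'.1 then 1 else 0) : ℕ)
              ≤ if c ∈ j.1 then 1 else 0 := by
            by_cases hl : Fin.last d ∈ j'.1
            · rw [if_pos hl, if_pos (hpj ▸ phiN_mem_c hB j' hl)]
            · rw [if_neg hl]; omega
          have h3 := congrArg (fun x => x c) hind
          simp only [Finsupp.add_apply, indF_apply] at h3
          omega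
        obtain ⟨k', l', hpk, hpl, hflag⟩ := trail_deco hB k l _ hcc
        have hproju : Finsupp.mapDomain (phiN hB) (Finsupp.single i' 1 + Finsupp.single j' 1)
            = Finsupp.single i 1 + Finsupp.single j 1 := by
          rw [pd_pair, hpi, hpj]
        have hprojv : Finsupp.mapDomain (phiN hB) (Finsupp.single k' 1 + Finsupp.single l' 1)
            = Finsupp.single k 1 + Finsupp.single l 1 := by
          rw [pd_pair, hpk, hpl]
        have heq2 : eSum eN (Finsupp.single i' 1 + Finsupp.single j' 1)
            = eSum eN (Finsupp.single k' 1 + Finsupp.single l' 1) := by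
          apply eN_eq_of hB
          · rw [hproju, hprojv, eSum_pair, eSum_pair]
            exact hind
          · rw [eSum_pair, eSum_pair]
            simp only [heN, Finsupp.add_apply, indF_apply]
            exact hflag.symm
        have hstr : mC.toSyn (Finsupp.single k' 1 + Finsupp.single l' 1)
            < mC.toSyn (Finsupp.single i' 1 + Finsupp.single j' 1) := by
          rw [hmC]
          apply (comb_toSyn_lt_iff (phiN hB) mM (m2 hB)).mpr
          left
          rw [hproju, hprojv]
          exact hstrict
        refine ⟨_, ⟨i', j', k', l', rfl, heq2, hstr⟩, ?_⟩
        rw [mLeadExp_binomial mC hstr]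
        exact hle_a
      · -- case 2 : projections equal, lex tie-break
        have hpd : Finsupp.mapDomain (phiN hB) b = Finsupp.mapDomain (phiN hB) a :=
          mM.toSyn.injective hPDeq
        haveI finN' : Finite {B : Finset (Fin (d+1)) // (M'✶).IsBase ↑B} := Subtype.finite
        haveI := @Finite.to_wellFoundedGT _ finN' linNi.toPartialOrder.toPreorder
        have hlex := (@Finsupp.Lex.lt_iff _ _ _ linNi.toLT _ _ _).mp ((MonomialOrder.lex_lt_iff).mp hlt2)
        obtain ⟨t, hbelow, htlt⟩ := hlex
        have hbelow' : ∀ s, LNlt hB s t → b s = a s := fun s hs => hbelow s hs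
        have hbt0 : b t < a t := htlt
        -- t is an x-variable
        have htx : Fin.last d ∉ t.1 := by
          intro hl
          obtain ⟨hct, htz⟩ := phiN_spec_y hB t hl
          have hxt : LNlt hB (xup hB (phiN hB t)) t :=
            LNlt_flag hB (by rw [phiN_xup]) (xup_last hB _) hl
          have heqx : b (xup hB (phiN hB t)) = a (xup hB (phiN hB t)) := hbelow' _ hxt
          have hFa := FF hB a (phiN hB t)
          have hFb := FF hB b (phiN hB t)
          rw [dif_pos hct] at hFa hFb
          have hpd' : Finsupp.mapDomain (phiN hB) b (phiN hB t)
              = Finsupp.mapDomain (phiN hB) a (phiN hB t) := by rw [hpd]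
          have e1 : a t = a (yup hB (phiN hB t) hct) := congrArg (fun x => a x) htz
          have e2 : b t = b (yup hB (phiN hB t) hct) := congrArg (fun x => b x) htz
          omega
        have ht0 : t = xup hB (phiN hB t) := phiN_spec_x hB t htx
        have hpd' : Finsupp.mapDomain (phiN hB) b (phiN hB t)
            = Finsupp.mapDomain (phiN hB) a (phiN hB t) := by rw [hpd]
        have e1 : a t = a (xup hB (phiN hB t)) := congrArg (fun x => a x) ht0
        have e2 : b t = b (xup hB (phiN hB t)) := congrArg (fun x => b x) ht0
        have hci : c ∈ (phiN hB t).1 := by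
          by_contra hc0
          have hFa := FF hB a (phiN hB t)
          have hFb := FF hB b (phiN hB t)
          rw [dif_neg hc0] at hFa hFb
          omega
        have hay : a (yup hB (phiN hB t) hci) < b (yup hB (phiN hB t) hci) := by
          have hFa := FF hB a (phiN hB t)
          have hFb := FF hB b (phiN hB t)
          rw [dif_pos hci] at hFa hFb
          omega
        have hyt : LNlt hB t (yup hB (phiN hB t) hci) :=
          LNlt_flag hB (by rw [phiN_yup]) htx (yup_last hB _ hci)
        -- find a y-variable above the base of t supported in a
        have hz : ∃ z, Fin.last d ∈ z.1 ∧ LMlt M (phiN hB t) (phiN hB z) ∧ 1 ≤ a z := by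
          by_contra hno
          push_neg at hno
          have hcontra : (eSum eN a) (Fin.last d) < (eSum eN b) (Fin.last d) := by
            rw [heN, eS_last, eS_last]
            apply Finset.sum_lt_sum
            · intro z _
              by_cases hl : Fin.last d ∈ z.1
              · rw [if_pos hl, if_pos hl]
                rcases LMlt_tricho (phiN hB z) (phiN hB t) with hlt' | heq' | hgt'
                · exact le_of_eq (hbelow' z (LNlt_phi hB hlt')).symm
                · obtain ⟨hcz, hzy⟩ := phiN_spec_y hB z hl
                  have hze : z = yup hB (phiN hB t) hci := by
                    rw [hzy]
                    exact yup_eq_of hB heq'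
                  rw [hze]
                  exact hay.le
                · have := hno z hl hgt'
                  omega
              · rw [if_neg hl, if_neg hl]
            · exact ⟨yup hB (phiN hB t) hci, Finset.mem_univ _,
                by rw [if_pos (yup_last hB _ hci), if_pos (yup_last hB _ hci)]; exact hay⟩
          rw [hklast] at hcontra
          exact lt_irrefl _ hcontra
        obtain ⟨z, hzl, hzgt, hza⟩ := hz
        have htz_lt : LNlt hB t z := LNlt_phi hB hzgt
        have htz_ne : t ≠ z := fun hh => LNlt_irrefl hB (hh ▸ htz_lt)
        have hxj_lt : LNlt hB t (xup hB (phiN hB z)) :=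
          LNlt_phi hB (by rw [phiN_xup]; exact hzgt)
        -- the swap binomial
        have hproju : Finsupp.mapDomain (phiN hB) (Finsupp.single t 1 + Finsupp.single z 1)
            = Finsupp.single (phiN hB t) 1 + Finsupp.single (phiN hB z) 1 := by
          rw [pd_pair]
        have hprojv : Finsupp.mapDomain (phiN hB)
            (Finsupp.single (yup hB (phiN hB t) hci) 1
              + Finsupp.single (xup hB (phiN hB z)) 1)
            = Finsupp.single (phiN hB t) 1 + Finsupp.single (phiN hB z) 1 := by
          rw [pd_pair, phiN_yup, phiN_xup]
        have heq2 : eSum eN (Finsupp.single t 1 + Finsupp.single z 1)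
            = eSum eN (Finsupp.single (yup hB (phiN hB t) hci) 1
              + Finsupp.single (xup hB (phiN hB z)) 1) := by
          apply eN_eq_of hB
          · rw [hproju, hprojv]
          · rw [eSum_pair, eSum_pair]
            simp only [heN, Finsupp.add_apply, indF_apply]
            rw [if_neg htx, if_pos hzl, if_pos (yup_last hB _ hci),
              if_neg (xup_last hB (phiN hB z))]
        have hswap : (m2 hB).toSyn (Finsupp.single (yup hB (phiN hB t) hci) 1
              + Finsupp.single (xup hB (phiN hB z)) 1)
            < (m2 hB).toSyn (Finsupp.single t 1 + Finsupp.single z 1) := by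
          apply (MonomialOrder.lex_lt_iff).mpr
          apply (@Finsupp.Lex.lt_iff _ _ _ (linN hB).toLT _ _ _).mpr
          refine ⟨t, ?_, ?_⟩
          · intro s hs
            have hs' : LNlt hB s t := hs
            have hs1 : s ≠ yup hB (phiN hB t) hci :=
              fun hh => LNlt_asymm hB (hh ▸ hs') hyt
            have hs2 : s ≠ xup hB (phiN hB z) :=
              fun hh => LNlt_asymm hB (hh ▸ hs') hxj_lt
            have hs3 : s ≠ t := fun hh => LNlt_irrefl hB (hh ▸ hs')
            have hs4 : s ≠ z := fun hh => LNlt_asymm hB (hh ▸ hs') htz_lt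
            simp only [ofLex_toLex, Finsupp.add_apply, Finsupp.single_apply]
            rw [if_neg (fun hh => hs1 hh.symm), if_neg (fun hh => hs2 hh.symm),
              if_neg (fun hh => hs3 hh.symm), if_neg (fun hh => hs4 hh.symm)]
          · have ht1 : yup hB (phiN hB t) hci ≠ t := fun hh => LNlt_irrefl hB (hh ▸ hyt)
            have ht2 : xup hB (phiN hB z) ≠ t := fun hh => LNlt_irrefl hB (hh ▸ hxj_lt)
            simp only [ofLex_toLex, Finsupp.add_apply, Finsupp.single_apply]
            rw [if_neg ht1, if_neg ht2]
            have hzt2 : ¬ (z = t) := fun hh => htz_ne hh.symm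
            simp [hzt2]
        have hstr : mC.toSyn (Finsupp.single (yup hB (phiN hB t) hci) 1
              + Finsupp.single (xup hB (phiN hB z)) 1)
            < mC.toSyn (Finsupp.single t 1 + Finsupp.single z 1) := by
          rw [hmC]
          apply (comb_toSyn_lt_iff (phiN hB) mM (m2 hB)).mpr
          right
          refine ⟨by rw [hproju, hprojv], hswap⟩
        refine ⟨_, ⟨t, z, yup hB (phiN hB t) hci, xup hB (phiN hB z), rfl, heq2, hstr⟩, ?_⟩
        rw [mLeadExp_binomial mC hstr]
        exact pair_le htz_ne (by omega) hza


end Final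
end

section
/- In the setting of the toric fiber product construction for two matroids M₁ (on [d₁], bases B_1,…,B_{n₁}, with c₁ ∉ B_j iff j ∈ [γ₁]) and M₂ (on [d₂], bases D_1,…,D_{n₂}, with c₂ ∉ D_k iff k ∈ [γ₂]), let f = ∏_{l=1}^{u} x^{i_l}_{j¹_l} − ∏_{l=1}^{u} x^{i_l}_{j²_l} be a homogeneous binomial in the toric ideal J_{D̃_{M₁}}, and let k = (k_1,…,k_u) with k_l ∈ [β_{i_l}], where (β_1,β_2) = (γ₂,n₂). Then the binomial f_k = ∏_{l=1}^{u} z^{i_l}_{j¹_l k_l} − ∏_{l=1}^{u} z^{i_l}_{j²_l k_l} lies in the toric ideal J_{D̃}. -/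
open MvPolynomial


section Enumerated

/-- The toric map `π_M` of an enumerated family of bases `B_1, …, B_n` of a matroid on
`{1, …, d}` : the variable `x_j` is sent to `∏_{l ∈ B_j} s_l`. -/
noncomputable def enumToricMap (K : Type) [Field K] {d n : ℕ} (B : Fin n → Finset (Fin d)) :
    MvPolynomial (Fin n) K →ₐ[K] MvPolynomial (Fin d) K :=
  aeval fun j => ∏ l ∈ B j, X l

/-- The toric ideal `J_M = ker π_M` of an enumerated family of bases. -/
noncomputable def enumToricIdeal (K : Type) [Field K] {d n : ℕ} (B : Fin n → Finset (Fin d)) :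
    Ideal (MvPolynomial (Fin n) K) :=
  RingHom.ker (enumToricMap K B).toRingHom

/-- The map `π̃_M` associated to the matrix `D̃_M`: the variable `Sum.inl j` is `x¹_j`
(sent to `S^{b_j}·w_1`) and `Sum.inr j` is `x²_j` (sent to `S^{b_j}·w_2`); the two extra
variables `w_1, w_2` of the target are `X (Sum.inr 0)` and `X (Sum.inr 1)`. -/
noncomputable def tildeToricMap (K : Type) [Field K] {d n γ : ℕ} (hγ : γ ≤ n)
    (B : Fin n → Finset (Fin d)) :
    MvPolynomial (Fin n ⊕ Fin γ) K →ₐ[K] MvPolynomial (Fin d ⊕ Fin 2) K :=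
  aeval (Sum.elim
    (fun j => (∏ l ∈ B j, X (Sum.inl l)) * X (Sum.inr 0))
    (fun j => (∏ l ∈ B (Fin.castLE hγ j), X (Sum.inl l)) * X (Sum.inr 1)))

/-- The variable `x^i_j` for a superscript `i ∈ {1,2}` (encoded as `Fin 2`, with `0 ↔ 1` and
`1 ↔ 2`) and `j ∈ [γ]`. -/
def xSup {n γ : ℕ} (hγ : γ ≤ n) (i : Fin 2) (a : Fin γ) : Fin n ⊕ Fin γ :=
  if i = 0 then Sum.inl (Fin.castLE hγ a) else Sum.inr a

/-- `f` is a binomial of the standard form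
`∏_{l<u} x_{j_l} · ∏_{l<v} x_{k_l} - ∏_{l<u} x_{j'_l} · ∏_{l<v} x_{k'_l}`,
where the `j`'s are in `[γ]` and the `k`'s are in `[n] ∖ [γ]`. -/
def IsStdBinomial {K : Type} [Field K] {n : ℕ} (γ : ℕ) (hγ : γ ≤ n)
    (f : MvPolynomial (Fin n) K) : Prop :=
  ∃ (u v : ℕ) (j j' : Fin u → Fin γ) (k k' : Fin v → Fin n),
    (∀ l, γ ≤ (k l : ℕ)) ∧ (∀ l, γ ≤ (k' l : ℕ)) ∧
    f = (∏ l, X (Fin.castLE hγ (j l))) * (∏ l, X (k l)) -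
        (∏ l, X (Fin.castLE hγ (j' l))) * (∏ l, X (k' l))

/-- The lifted set `F̃ = {f^I : f ∈ F, I ∈ {1,2}^{u_f}} ∪
{x¹_{j₂}x²_{j₁} - x¹_{j₁}x²_{j₂} : 1 ≤ j₁ < j₂ ≤ γ}`. -/
def liftedSet (K : Type) [Field K] {n : ℕ} {γ : ℕ} (hγ : γ ≤ n)
    (F : Set (MvPolynomial (Fin n) K)) : Set (MvPolynomial (Fin n ⊕ Fin γ) K) :=
  {g | ∃ (u v : ℕ) (j j' : Fin u → Fin γ) (k k' : Fin v → Fin n) (I : Fin u → Fin 2),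
      (∀ l, γ ≤ (k l : ℕ)) ∧ (∀ l, γ ≤ (k' l : ℕ)) ∧
      ((∏ l, X (Fin.castLE hγ (j l))) * (∏ l, X (k l)) -
        (∏ l, X (Fin.castLE hγ (j' l))) * (∏ l, X (k' l)) ∈ F) ∧
      g = (∏ l, X (xSup hγ (I l) (j l))) * (∏ l, X (Sum.inl (k l))) -
          (∏ l, X (xSup hγ (I l) (j' l))) * (∏ l, X (Sum.inl (k' l)))}
  ∪ {g | ∃ j₁ j₂ : Fin γ, j₁ < j₂ ∧
      g = X (Sum.inl (Fin.castLE hγ j₂)) * X (Sum.inr j₁) -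
          X (Sum.inl (Fin.castLE hγ j₁)) * X (Sum.inr j₂)}

end Enumerated

section FiberProduct

/-- The toric map of the matrix `D̃`: the variable `z¹_{jk} = Sum.inl (j, k)`
(for `j ∈ [n₁]`, `k ∈ [γ₂]`) is sent to `S^{b_j}·T^{d_k}·w₁` and the variable
`z²_{jk} = Sum.inr (j, k)` (for `j ∈ [γ₁]`, `k ∈ [n₂]`) to `S^{b_j}·T^{d_k}·w₂`. -/
noncomputable def zToricMap (K : Type) [Field K] {d₁ n₁ γ₁ d₂ n₂ γ₂ : ℕ}
    (hγ₁ : γ₁ ≤ n₁) (hγ₂ : γ₂ ≤ n₂)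
    (B : Fin n₁ → Finset (Fin d₁)) (D : Fin n₂ → Finset (Fin d₂)) :
    MvPolynomial ((Fin n₁ × Fin γ₂) ⊕ (Fin γ₁ × Fin n₂)) K →ₐ[K]
      MvPolynomial ((Fin d₁ ⊕ Fin d₂) ⊕ Fin 2) K :=
  aeval (Sum.elim
    (fun p => (∏ l ∈ B p.1, X (Sum.inl (Sum.inl l))) *
      (∏ l ∈ D (Fin.castLE hγ₂ p.2), X (Sum.inl (Sum.inr l))) * X (Sum.inr 0))
    (fun p => (∏ l ∈ B (Fin.castLE hγ₁ p.1), X (Sum.inl (Sum.inl l))) *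
      (∏ l ∈ D p.2, X (Sum.inl (Sum.inr l))) * X (Sum.inr 1)))

/-- The data of one factor of a binomial of `J_{D̃_{M₁}}` together with a chosen second
index `k_l`: a factor with superscript `1` carries `(j¹_l, j²_l, k_l) ∈ [n₁] × [n₁] × [γ₂]`
and a factor with superscript `2` carries `(j¹_l, j²_l, k_l) ∈ [γ₁] × [γ₁] × [n₂]`. -/
def ZFac (n₁ γ₁ γ₂ n₂ : ℕ) : Type :=
  (Fin n₁ × Fin n₁ × Fin γ₂) ⊕ (Fin γ₁ × Fin γ₁ × Fin n₂)

/-- The variable `x^{i_l}_{j¹_l}` of a factor. -/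
def facX1 {n₁ γ₁ γ₂ n₂ : ℕ} : ZFac n₁ γ₁ γ₂ n₂ → Fin n₁ ⊕ Fin γ₁
  | Sum.inl t => Sum.inl t.1
  | Sum.inr t => Sum.inr t.1

/-- The variable `x^{i_l}_{j²_l}` of a factor. -/
def facX2 {n₁ γ₁ γ₂ n₂ : ℕ} : ZFac n₁ γ₁ γ₂ n₂ → Fin n₁ ⊕ Fin γ₁
  | Sum.inl t => Sum.inl t.2.1
  | Sum.inr t => Sum.inr t.2.1

/-- The variable `z^{i_l}_{j¹_l k_l}` of a factor. -/
def facZ1 {n₁ γ₁ γ₂ n₂ : ℕ} :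
    ZFac n₁ γ₁ γ₂ n₂ → (Fin n₁ × Fin γ₂) ⊕ (Fin γ₁ × Fin n₂)
  | Sum.inl t => Sum.inl (t.1, t.2.2)
  | Sum.inr t => Sum.inr (t.1, t.2.2)

/-- The variable `z^{i_l}_{j²_l k_l}` of a factor. -/
def facZ2 {n₁ γ₁ γ₂ n₂ : ℕ} :
    ZFac n₁ γ₁ γ₂ n₂ → (Fin n₁ × Fin γ₂) ⊕ (Fin γ₁ × Fin n₂)
  | Sum.inl t => Sum.inl (t.2.1, t.2.2)
  | Sum.inr t => Sum.inr (t.2.1, t.2.2)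

end FiberProduct

/-- If `f = ∏_l x^{i_l}_{j¹_l} - ∏_l x^{i_l}_{j²_l}` is a homogeneous binomial in
`J_{D̃_{M₁}}` and `k = (k_1, …, k_u)` with `k_l ∈ [β_{i_l}]`, then
`f_k = ∏_l z^{i_l}_{j¹_l k_l} - ∏_l z^{i_l}_{j²_l k_l}` lies in `J_{D̃}`. -/
theorem statement10 (K : Type) [Field K]
    {d₁ n₁ γ₁ d₂ n₂ γ₂ : ℕ}
    (M₁ : Matroid (Fin d₁)) (hE₁ : M₁.E = Set.univ)
    (B : Fin n₁ → Finset (Fin d₁)) (hBinj : Function.Injective B)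
    (hBall : ∀ S : Finset (Fin d₁), M₁.IsBase ↑S ↔ ∃ j, B j = S)
    (c₁ : Fin d₁) (hc₁ : ¬ ∀ S, M₁.IsBase S → c₁ ∈ S)
    (hγ₁ : γ₁ ≤ n₁) (hsplit₁ : ∀ j : Fin n₁, c₁ ∉ B j ↔ (j : ℕ) < γ₁)
    (M₂ : Matroid (Fin d₂)) (hE₂ : M₂.E = Set.univ)
    (D : Fin n₂ → Finset (Fin d₂)) (hDinj : Function.Injective D)
    (hDall : ∀ S : Finset (Fin d₂), M₂.IsBase ↑S ↔ ∃ k, D k = S)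
    (c₂ : Fin d₂) (hc₂ : ¬ ∀ S, M₂.IsBase S → c₂ ∈ S)
    (hγ₂ : γ₂ ≤ n₂) (hsplit₂ : ∀ k : Fin n₂, c₂ ∉ D k ↔ (k : ℕ) < γ₂)
    (u : ℕ) (t : Fin u → ZFac n₁ γ₁ γ₂ n₂)
    (hf : (∏ l, X (facX1 (t l))) - (∏ l, X (facX2 (t l)))
      ∈ RingHom.ker (tildeToricMap K hγ₁ B).toRingHom) :
    (∏ l, X (facZ1 (t l))) - (∏ l, X (facZ2 (t l)))
      ∈ RingHom.ker (zToricMap K hγ₁ hγ₂ B D).toRingHom := by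
  classical
  rw [RingHom.mem_ker] at hf ⊢
  simp only [AlgHom.toRingHom_eq_coe, RingHom.coe_coe, map_sub, sub_eq_zero] at hf ⊢
  -- the embedding of the target of `tildeToricMap` into the target of `zToricMap`
  let g : MvPolynomial (Fin d₁ ⊕ Fin 2) K →ₐ[K]
      MvPolynomial ((Fin d₁ ⊕ Fin d₂) ⊕ Fin 2) K :=
    aeval (Sum.elim (fun l => X (Sum.inl (Sum.inl l))) (fun i => X (Sum.inr i)))
  -- the `D`-part of the image of a factor
  let Dfac : ZFac n₁ γ₁ γ₂ n₂ → MvPolynomial ((Fin d₁ ⊕ Fin d₂) ⊕ Fin 2) K :=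
    fun s => Sum.elim
      (fun p => ∏ l ∈ D (Fin.castLE hγ₂ p.2.2), X (Sum.inl (Sum.inr l)))
      (fun p => ∏ l ∈ D p.2.2, X (Sum.inl (Sum.inr l))) s
  have key1 : ∀ s : ZFac n₁ γ₁ γ₂ n₂,
      zToricMap K hγ₁ hγ₂ B D (X (facZ1 s)) =
        g (tildeToricMap K hγ₁ B (X (facX1 s))) * Dfac s := by
    rintro (⟨j, j', k⟩ | ⟨j, j', k⟩) <;>
      simp only [zToricMap, tildeToricMap, facZ1, facX1, Dfac, g, aeval_X, Sum.elim_inl,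
        Sum.elim_inr, map_mul, map_prod] <;> ring
  have key2 : ∀ s : ZFac n₁ γ₁ γ₂ n₂,
      zToricMap K hγ₁ hγ₂ B D (X (facZ2 s)) =
        g (tildeToricMap K hγ₁ B (X (facX2 s))) * Dfac s := by
    rintro (⟨j, j', k⟩ | ⟨j, j', k⟩) <;>
      simp only [zToricMap, tildeToricMap, facZ2, facX2, Dfac, g, aeval_X, Sum.elim_inl,
        Sum.elim_inr, map_mul, map_prod] <;> ring
  calc zToricMap K hγ₁ hγ₂ B D (∏ l, X (facZ1 (t l)))
      = ∏ l, (g (tildeToricMap K hγ₁ B (X (facX1 (t l)))) * Dfac (t l)) := by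
        rw [map_prod]; exact Finset.prod_congr rfl fun l _ => key1 (t l)
    _ = g (tildeToricMap K hγ₁ B (∏ l, X (facX1 (t l)))) * ∏ l, Dfac (t l) := by
        rw [Finset.prod_mul_distrib, map_prod, map_prod]
    _ = g (tildeToricMap K hγ₁ B (∏ l, X (facX2 (t l)))) * ∏ l, Dfac (t l) := by rw [hf]
    _ = ∏ l, (g (tildeToricMap K hγ₁ B (X (facX2 (t l)))) * Dfac (t l)) := by
        rw [Finset.prod_mul_distrib, map_prod, map_prod]
    _ = zToricMap K hγ₁ hγ₂ B D (∏ l, X (facZ2 (t l))) := by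
        rw [map_prod]; exact (Finset.prod_congr rfl fun l _ => (key2 (t l))).symm
end

section
/- Let M₁ and M₂ be matroids on ground sets E₁ and E₂ with E₁ ∩ E₂ = {c}. If the toric ideals J_{M₁} and J_{M₂} are both generated by quadratic binomials, then the toric ideal of the series connection S(M₁,M₂) with respect to the basepoint c is generated by quadratic binomials. -/
open MvPolynomial


section MatroidOps

/-- `c` is a loop of `M`: an element of the ground set belonging to no basis of `M`. -/
def IsLoopElem {α : Type} (M : Matroid α) (c : α) : Prop :=
  c ∈ M.E ∧ ∀ B, M.IsBase B → c ∉ B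

/-- `c` is a coloop of `M`: an element contained in every basis of `M`. -/
def IsColoopElem {α : Type} (M : Matroid α) (c : α) : Prop :=
  ∀ B, M.IsBase B → c ∈ B

/-- `M'` is the deletion `M ∖ c`: its ground set is `M.E \ {c}` and its bases are
`{B \ {c} : B basis of M}` if `c` is a coloop of `M`, and `{B basis of M : c ∉ B}`
otherwise. -/
def IsDeletionOf {α : Type} (M' M : Matroid α) (c : α) : Prop :=
  M'.E = M.E \ {c} ∧ ∀ S : Set α, M'.IsBase S ↔
    ((IsColoopElem M c ∧ ∃ B, M.IsBase B ∧ S = B \ {c}) ∨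
     (¬ IsColoopElem M c ∧ M.IsBase S ∧ c ∉ S))

/-- `M'` is the contraction `M / c`, defined dually: `M / c = (M✶ ∖ c)✶`. -/
def IsContractionOf {α : Type} (M' M : Matroid α) (c : α) : Prop :=
  IsDeletionOf (M'✶) (M✶) c

end MatroidOps


set_option linter.unusedSectionVars false

open Multiset Relation

namespace SC13

open Multiset Relation

variable {α : Type} [DecidableEq α]

section Wdef

variable {σ : Type} (β : σ → Finset α)

/-- union of the finsets attached to the elements of `m`, as a multiset -/
def mU (m : Multiset σ) : Multiset α := (m.map fun i => (β i).val).sum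

@[simp] lemma mU_zero : mU β 0 = 0 := rfl

@[simp] lemma mU_cons (i : σ) (m : Multiset σ) :
    mU β (i ::ₘ m) = (β i).val + mU β m := by simp [mU]

@[simp] lemma mU_add (m m' : Multiset σ) :
    mU β (m + m') = mU β m + mU β m' := by simp [mU]

@[simp] lemma mU_singleton (i : σ) : mU β {i} = (β i).val := by simp [mU]

/-- a quadratic exchange step -/
def QStep (x y : Multiset σ) : Prop :=
  ∃ (i j k l : σ) (w : Multiset σ), x = i ::ₘ j ::ₘ w ∧ y = k ::ₘ l ::ₘ w ∧
    (β i).val + (β j).val = (β k).val + (β l).val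

def QRel : Multiset σ → Multiset σ → Prop := ReflTransGen (QStep β)

/-- connectivity under quadratic moves of all fibers of `mU` -/
def Wq : Prop := ∀ x y : Multiset σ, mU β x = mU β y → QRel β x y

variable {β}

lemma QStep.symm {x y : Multiset σ} (h : QStep β x y) : QStep β y x := by
  obtain ⟨i, j, k, l, w, h1, h2, h3⟩ := h
  exact ⟨k, l, i, j, w, h2, h1, h3.symm⟩

lemma QStep.mU_eq {x y : Multiset σ} (h : QStep β x y) : mU β x = mU β y := by
  obtain ⟨i, j, k, l, w, h1, h2, h3⟩ := h
  subst h1 h2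
  simp [← add_assoc, h3]

lemma QStep.card_eq {x y : Multiset σ} (h : QStep β x y) :
    Multiset.card x = Multiset.card y := by
  obtain ⟨i, j, k, l, w, h1, h2, h3⟩ := h; subst h1 h2; simp

lemma QRel.refl (x : Multiset σ) : QRel β x x := ReflTransGen.refl

lemma QRel.symm {x y : Multiset σ} (h : QRel β x y) : QRel β y x := by
  induction h with
  | refl => exact ReflTransGen.refl
  | tail _ hstep ih => exact (ReflTransGen.single hstep.symm).trans ih

lemma QRel.trans {x y z : Multiset σ} (h : QRel β x y) (h' : QRel β y z) : QRel β x z :=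
  ReflTransGen.trans h h'

lemma QRel.mU_eq {x y : Multiset σ} (h : QRel β x y) : mU β x = mU β y := by
  induction h with
  | refl => rfl
  | tail _ hstep ih => exact ih.trans hstep.mU_eq

lemma QRel.card_eq {x y : Multiset σ} (h : QRel β x y) :
    Multiset.card x = Multiset.card y := by
  induction h with
  | refl => rfl
  | tail _ hstep ih => exact ih.trans hstep.card_eq

lemma QStep.cons {x y : Multiset σ} (a : σ) (h : QStep β x y) :
    QStep β (a ::ₘ x) (a ::ₘ y) := by
  obtain ⟨i, j, k, l, w, h1, h2, h3⟩ := h; subst h1 h2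
  exact ⟨i, j, k, l, a ::ₘ w, by rw [Multiset.cons_swap a, Multiset.cons_swap a j],
    by rw [Multiset.cons_swap a, Multiset.cons_swap a l], h3⟩

lemma QRel.cons {x y : Multiset σ} (a : σ) (h : QRel β x y) :
    QRel β (a ::ₘ x) (a ::ₘ y) := by
  induction h with
  | refl => exact ReflTransGen.refl
  | tail _ hstep ih => exact ih.trans (ReflTransGen.single (hstep.cons a))

end Wdef

section Algebra

variable (K : Type) [Field K] {σ : Type} (β : σ → Finset α)

/-- monomial attached to a multiset of variables -/
noncomputable def xmon (m : Multiset σ) : MvPolynomial σ K := (m.map X).prod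

@[simp] lemma xmon_zero : xmon K (0 : Multiset σ) = 1 := by simp [xmon]

@[simp] lemma xmon_cons (i : σ) (m : Multiset σ) :
    xmon K (i ::ₘ m) = X i * xmon K m := by simp [xmon]

@[simp] lemma xmon_add (m m' : Multiset σ) :
    xmon K (m + m') = xmon K m * xmon K m' := by simp [xmon]

lemma xmon_eq_monomial [DecidableEq σ] (m : Multiset σ) :
    xmon K m = monomial (Multiset.toFinsupp m) 1 := by
  induction m using Multiset.induction with
  | empty => simp [monomial_zero']
  | cons i m ih =>
      rw [xmon_cons, ih, X, monomial_mul, one_mul,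
        show (i ::ₘ m) = {i} + m from (Multiset.singleton_add i m).symm,
        AddEquiv.map_add, Multiset.toFinsupp_singleton]

/-- the toric map -/
noncomputable def tmap : MvPolynomial σ K →ₐ[K] MvPolynomial α K :=
  aeval fun i => ∏ l ∈ β i, X l

lemma tmap_X (i : σ) : tmap K β (X i) = xmon K ((β i).val) := by
  rw [tmap, aeval_X]; rfl

lemma tmap_xmon (m : Multiset σ) : tmap K β (xmon K m) = xmon K (mU β m) := by
  induction m using Multiset.induction with
  | empty => simp
  | cons i m ih => rw [xmon_cons, map_mul, tmap_X, ih, mU_cons, xmon_add]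

end Algebra

end SC13

namespace SC13

section L1

variable (K : Type) [Field K] {α : Type} [DecidableEq α] {σ : Type} [DecidableEq σ]
variable (β : σ → Finset α)

/-- multiset associated to an exponent vector -/
noncomputable def tm (d : σ →₀ ℕ) : Multiset σ := Multiset.toFinsupp.symm d

@[simp] lemma toFinsupp_tm (d : σ →₀ ℕ) : Multiset.toFinsupp (tm d) = d :=
  Multiset.toFinsupp.apply_symm_apply d

@[simp] lemma tm_toFinsupp (m : Multiset σ) : tm (Multiset.toFinsupp m) = m :=
  Multiset.toFinsupp.symm_apply_apply m

@[simp] lemma tm_add (d d' : σ →₀ ℕ) : tm (d + d') = tm d + tm d' :=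
  map_add Multiset.toFinsupp.symm d d'

lemma xmon_tm (d : σ →₀ ℕ) : xmon K (tm d) = monomial d 1 := by
  rw [xmon_eq_monomial, toFinsupp_tm]

lemma tmap_monomial (d : σ →₀ ℕ) :
    tmap K β (monomial d 1) = monomial (Multiset.toFinsupp (mU β (tm d))) 1 := by
  rw [← xmon_tm, tmap_xmon, xmon_eq_monomial]

lemma tmap_monomial' (d : σ →₀ ℕ) (c : K) :
    tmap K β (monomial d c) = monomial (Multiset.toFinsupp (mU β (tm d))) c := by
  have : (monomial d c : MvPolynomial σ K) = c • monomial d 1 := by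
    rw [smul_monomial, smul_eq_mul, mul_one]
  rw [this, map_smul, tmap_monomial, smul_monomial, smul_eq_mul, mul_one]

/-- kernel elements lie in the `K`-span of binomials with equal image -/
lemma ker_subset_binomial_span (p : MvPolynomial σ K) (hp : tmap K β p = 0) :
    p ∈ Submodule.span K
      {q : MvPolynomial σ K | ∃ u v : σ →₀ ℕ,
        mU β (tm u) = mU β (tm v) ∧ q = monomial u 1 - monomial v 1} := by
  classical
  set Γ : (σ →₀ ℕ) → Multiset α := fun d => mU β (tm d) with hΓ
  let rep : Multiset α → (σ →₀ ℕ) := fun t => if h : ∃ u, Γ u = t then h.choose else 0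
  have hrep : ∀ d : σ →₀ ℕ, Γ (rep (Γ d)) = Γ d := by
    intro d
    have h : ∃ u, Γ u = Γ d := ⟨d, rfl⟩
    simp only [rep, dif_pos h]
    exact h.choose_spec
  have hsplit : p = (∑ d ∈ p.support, coeff d p • (monomial d 1 - monomial (rep (Γ d)) 1))
      + ∑ d ∈ p.support, coeff d p • monomial (rep (Γ d)) 1 := by
    rw [← Finset.sum_add_distrib]
    conv_lhs => rw [as_sum p]
    refine Finset.sum_congr rfl fun d _ => ?_
    rw [smul_sub, sub_add_cancel, smul_monomial, smul_eq_mul, mul_one]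
  have hzero : (∑ d ∈ p.support, coeff d p • monomial (rep (Γ d)) 1 : MvPolynomial σ K) = 0 := by
    apply MvPolynomial.ext
    intro e
    rw [coeff_sum, coeff_zero]
    simp only [coeff_smul, coeff_monomial, smul_eq_mul]
    by_cases hex : ∃ d₀ ∈ p.support, rep (Γ d₀) = e
    · obtain ⟨d₀, hd₀mem, hd₀⟩ := hex
      have hcond : ∀ d ∈ p.support, (rep (Γ d) = e ↔ Γ d = Γ d₀) := by
        intro d _
        constructor
        · intro h
          have h2 : rep (Γ d) = rep (Γ d₀) := h.trans hd₀.symm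
          calc Γ d = Γ (rep (Γ d)) := (hrep d).symm
            _ = Γ (rep (Γ d₀)) := by rw [h2]
            _ = Γ d₀ := hrep d₀
        · intro h; rw [h, hd₀]
      have hphip : coeff (Multiset.toFinsupp (Γ d₀)) (tmap K β p) = 0 := by
        rw [hp, coeff_zero]
      have hform : tmap K β p = ∑ d ∈ p.support, monomial (Multiset.toFinsupp (Γ d)) (coeff d p) := by
        conv_lhs => rw [as_sum p]
        rw [map_sum]
        exact Finset.sum_congr rfl fun d _ => tmap_monomial' K β d (coeff d p)
      rw [hform, coeff_sum] at hphip
      simp only [coeff_monomial] at hphip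
      calc ∑ d ∈ p.support, coeff d p * (if rep (Γ d) = e then (1:K) else 0)
          = ∑ d ∈ p.support,
              (if Multiset.toFinsupp (Γ d) = Multiset.toFinsupp (Γ d₀) then coeff d p else 0) := by
            refine Finset.sum_congr rfl fun d hd => ?_
            have hiff : (Multiset.toFinsupp (Γ d) = Multiset.toFinsupp (Γ d₀)) ↔ Γ d = Γ d₀ :=
              ⟨fun h => Multiset.toFinsupp.injective h, fun h => by rw [h]⟩
            by_cases h : Γ d = Γ d₀
            · rw [if_pos ((hcond d hd).2 h), if_pos (hiff.2 h), mul_one]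
            · rw [if_neg (fun hc => h ((hcond d hd).1 hc)), if_neg (fun hc => h (hiff.1 hc)),
                mul_zero]
        _ = 0 := hphip
    · push_neg at hex
      refine Finset.sum_eq_zero fun d hd => ?_
      rw [if_neg (hex d hd), mul_zero]
  rw [hsplit, hzero, add_zero]
  refine Submodule.sum_mem _ fun d _ => Submodule.smul_mem _ _ ?_
  exact Submodule.subset_span ⟨d, rep (Γ d), (hrep d).symm, rfl⟩

/-- binomials whose multisets are related by quadratic moves lie in the span of
quadratic binomials of the kernel -/
lemma qrel_binomial_mem {x y : Multiset σ} (h : QRel β x y) :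
    xmon K x - xmon K y ∈ Ideal.span {g : MvPolynomial σ K |
      (∃ i j k l : σ, g = X i * X j - X k * X l) ∧ g ∈ RingHom.ker (tmap K β).toRingHom} := by
  induction h with
  | refl => rw [sub_self]; exact Ideal.zero_mem _
  | @tail b c hxb hstep ih =>
      obtain ⟨i, j, k, l, w, h1, h2, h3⟩ := hstep
      have hmem : (X i * X j - X k * X l : MvPolynomial σ K) ∈
          {g : MvPolynomial σ K | (∃ i j k l : σ, g = X i * X j - X k * X l) ∧
            g ∈ RingHom.ker (tmap K β).toRingHom} := by
        refine ⟨⟨i, j, k, l, rfl⟩, ?_⟩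
        have e1 : (X i * X j : MvPolynomial σ K) = xmon K (i ::ₘ j ::ₘ 0) := by
          rw [xmon_cons, xmon_cons, xmon_zero, mul_one]
        have e2 : (X k * X l : MvPolynomial σ K) = xmon K (k ::ₘ l ::ₘ 0) := by
          rw [xmon_cons, xmon_cons, xmon_zero, mul_one]
        rw [RingHom.mem_ker]
        show tmap K β _ = 0
        rw [map_sub, e1, e2, tmap_xmon, tmap_xmon,
          show mU β (i ::ₘ j ::ₘ 0) = mU β (k ::ₘ l ::ₘ 0) by simp [h3], sub_self]
      have hb : xmon K b - xmon K c = xmon K w * (X i * X j - X k * X l) := by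
        rw [h1, h2]; simp only [xmon_cons]; ring
      have hsplit : xmon K x - xmon K c
          = (xmon K x - xmon K b) + (xmon K b - xmon K c) := by ring
      rw [hsplit]
      refine Ideal.add_mem _ ih ?_
      rw [hb]
      exact Ideal.mul_mem_left _ _ (Ideal.subset_span hmem)

attribute [local instance] Classical.propDecidable

/-- the counting functional -/
noncomputable def Tf (x : Multiset σ) (p : MvPolynomial σ K) : K :=
  (AddMonoidAlgebra.coeff p).sum fun d c => if QRel β x (tm d) then c else 0

lemma Tf_zero (x : Multiset σ) : Tf K β x 0 = 0 := by
  rw [Tf]; exact Finsupp.sum_zero_index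

lemma Tf_add (x : Multiset σ) (p q : MvPolynomial σ K) :
    Tf K β x (p + q) = Tf K β x p + Tf K β x q := by
  classical
  exact Finsupp.sum_add_index' (fun a => by simp) (fun a b₁ b₂ => by split <;> simp)

noncomputable def TfHom (x : Multiset σ) : MvPolynomial σ K →+ K :=
  ⟨⟨Tf K β x, Tf_zero K β x⟩, fun p q => Tf_add K β x p q⟩

lemma TfHom_monomial (x : Multiset σ) (d : σ →₀ ℕ) (c : K) :
    TfHom K β x (monomial d c) = if QRel β x (tm d) then c else 0 := by
  classical
  show Tf K β x (monomial d c) = _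
  rw [Tf, ← single_eq_monomial]
  exact Finsupp.sum_single_index (by simp)

lemma TfHom_vanish (x : Multiset σ) (G : Set (MvPolynomial σ K))
    (hG : IsQuadBinomialSet G) (hker : ∀ g ∈ G, g ∈ RingHom.ker (tmap K β).toRingHom) :
    ∀ p ∈ Ideal.span G, ∀ r : MvPolynomial σ K, TfHom K β x (r * p) = 0 := by
  intro p hp
  refine Submodule.span_induction ?_ ?_ ?_ ?_ hp
  · -- generators
    intro g hg r
    obtain ⟨i, j, k, l, hgeq⟩ := hG g hg
    have hgker := hker g hg
    rw [RingHom.mem_ker] at hgker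
    subst hgeq
    -- equality of images gives the exchange condition
    have e1 : (X i * X j : MvPolynomial σ K) = xmon K (i ::ₘ j ::ₘ 0) := by
      rw [xmon_cons, xmon_cons, xmon_zero, mul_one]
    have e2 : (X k * X l : MvPolynomial σ K) = xmon K (k ::ₘ l ::ₘ 0) := by
      rw [xmon_cons, xmon_cons, xmon_zero, mul_one]
    have himg : mU β (i ::ₘ j ::ₘ 0) = mU β (k ::ₘ l ::ₘ 0) := by
      have hthis : tmap K β (X i * X j - X k * X l) = 0 := hgker
      rw [map_sub, e1, e2, tmap_xmon, tmap_xmon, sub_eq_zero,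
        xmon_eq_monomial, xmon_eq_monomial] at hthis
      have h1 := (monomial_eq_monomial_iff _ _ (1:K) 1).1 hthis
      have h2 := (h1.resolve_right (by simp)).1
      exact Multiset.toFinsupp.injective h2
    -- compute Tf (r * g)
    set u1 : σ →₀ ℕ := Multiset.toFinsupp (i ::ₘ j ::ₘ 0) with hu1
    set u2 : σ →₀ ℕ := Multiset.toFinsupp (k ::ₘ l ::ₘ 0) with hu2
    have hstep : ∀ d : σ →₀ ℕ, QStep β (tm (d + u1)) (tm (d + u2)) := by
      intro d
      refine ⟨i, j, k, l, tm d, ?_, ?_, ?_⟩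
      · rw [tm_add, hu1, tm_toFinsupp, add_comm, Multiset.cons_add, Multiset.cons_add, zero_add]
      · rw [tm_add, hu2, tm_toFinsupp, add_comm, Multiset.cons_add, Multiset.cons_add, zero_add]
      · have h := himg
        simp only [mU_cons, mU_zero, add_zero] at h
        exact h
    conv_lhs => rw [as_sum r, Finset.sum_mul, map_sum]
    refine Finset.sum_eq_zero fun d _ => ?_
    have hterm : (monomial d (coeff d r)) * (X i * X j - X k * X l)
        = monomial (d + u1) (coeff d r) - monomial (d + u2) (coeff d r) := by
      rw [mul_sub, e1, e2, xmon_eq_monomial, xmon_eq_monomial, ← hu1, ← hu2,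
        monomial_mul, monomial_mul, mul_one]
    rw [hterm, map_sub, TfHom_monomial, TfHom_monomial]
    have hiff : QRel β x (tm (d + u1)) ↔ QRel β x (tm (d + u2)) :=
      ⟨fun h => h.trans (ReflTransGen.single (hstep d)),
       fun h => h.trans (ReflTransGen.single (hstep d).symm)⟩
    rw [if_congr hiff rfl rfl, sub_self]
  · intro r; rw [mul_zero, _root_.map_zero]
  · intro p q _ _ hp hq r
    rw [mul_add, _root_.map_add, hp, hq, add_zero]
  · intro a p _ hp r
    rw [smul_eq_mul, show r * (a * p) = (r * a) * p by ring]
    exact hp (r * a)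

/-- Main characterization: the kernel of the toric map is generated by quadratic
binomials iff all fibers of `mU` are connected by quadratic moves. -/
theorem quadgen_iff_wq :
    GeneratedByQuadBinomials (RingHom.ker (tmap K β).toRingHom) ↔ Wq β := by
  constructor
  · rintro ⟨G, hG, hspan⟩ x y hxy
    have hker : xmon K x - xmon K y ∈ RingHom.ker (tmap K β).toRingHom := by
      rw [RingHom.mem_ker]
      show tmap K β _ = 0
      rw [map_sub, tmap_xmon, tmap_xmon, hxy, sub_self]
    rw [← hspan] at hker
    have hGker : ∀ g ∈ G, g ∈ RingHom.ker (tmap K β).toRingHom := by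
      intro g hg
      exact hspan ▸ Ideal.subset_span hg
    have h0 := TfHom_vanish K β x G hG hGker _ hker 1
    rw [one_mul, map_sub] at h0
    have hx1 : TfHom K β x (xmon K x) = 1 := by
      rw [xmon_eq_monomial, TfHom_monomial, tm_toFinsupp, if_pos (QRel.refl x)]
    have hy : TfHom K β x (xmon K y) = if QRel β x y then 1 else 0 := by
      rw [xmon_eq_monomial, TfHom_monomial, tm_toFinsupp]
    by_contra hnot
    rw [hx1, hy, if_neg hnot, sub_zero] at h0
    exact one_ne_zero h0
  · intro h
    refine ⟨{g : MvPolynomial σ K | (∃ i j k l : σ, g = X i * X j - X k * X l) ∧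
      g ∈ RingHom.ker (tmap K β).toRingHom}, fun f hf => hf.1, ?_⟩
    apply le_antisymm
    · rw [Ideal.span_le]; exact fun g hg => hg.2
    · intro p hp
      have hp' : tmap K β p = 0 := hp
      have h1 := ker_subset_binomial_span K β p hp'
      have h2 : Submodule.span K {q : MvPolynomial σ K | ∃ u v : σ →₀ ℕ,
          mU β (tm u) = mU β (tm v) ∧ q = monomial u 1 - monomial v 1}
          ≤ (Ideal.span {g : MvPolynomial σ K | (∃ i j k l : σ, g = X i * X j - X k * X l) ∧
            g ∈ RingHom.ker (tmap K β).toRingHom}).restrictScalars K := by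
        rw [Submodule.span_le]
        rintro q ⟨u, v, huv, rfl⟩
        have hm := qrel_binomial_mem K β (h (tm u) (tm v) huv)
        rwa [xmon_tm, xmon_tm] at hm
      exact h2 h1

end L1

section Core

variable {α : Type} [DecidableEq α]

-- generic transfer lemmas --------------------------------------------------

lemma mU_map {σ τ : Type} {β : σ → Finset α} {γ : τ → Finset α} (f : σ → τ)
    (hf : ∀ i, γ (f i) = β i) (m : Multiset σ) : mU γ (m.map f) = mU β m := by
  induction m using Multiset.induction with
  | empty => rfl
  | cons i m ih => rw [Multiset.map_cons, mU_cons, mU_cons, ih, hf]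

lemma QStep.map {σ τ : Type} {β : σ → Finset α} {γ : τ → Finset α} (f : σ → τ)
    (hf : ∀ i, γ (f i) = β i) {x y : Multiset σ} (h : QStep β x y) :
    QStep γ (x.map f) (y.map f) := by
  obtain ⟨i, j, k, l, w, h1, h2, h3⟩ := h
  subst h1 h2
  exact ⟨f i, f j, f k, f l, w.map f, by simp, by simp, by rw [hf, hf, hf, hf]; exact h3⟩

lemma QRel.map {σ τ : Type} {β : σ → Finset α} {γ : τ → Finset α} (f : σ → τ)
    (hf : ∀ i, γ (f i) = β i) {x y : Multiset σ} (h : QRel β x y) :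
    QRel γ (x.map f) (y.map f) := by
  induction h with
  | refl => exact ReflTransGen.refl
  | tail _ hstep ih => exact ih.trans (ReflTransGen.single (hstep.map f hf))

/-- transfer of the combinatorial property along an equivalence of base predicates -/
lemma wq_congr {P Q : Finset α → Prop} (h : ∀ B, P B ↔ Q B)
    (hw : Wq (fun b : {B : Finset α // P B} => b.1)) :
    Wq (fun b : {B : Finset α // Q B} => b.1) := by
  intro x y hxy
  set f : {B : Finset α // Q B} → {B : Finset α // P B} := fun b => ⟨b.1, (h _).2 b.2⟩ with hf
  set g : {B : Finset α // P B} → {B : Finset α // Q B} := fun b => ⟨b.1, (h _).1 b.2⟩ with hg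
  have hfg : ∀ b, g (f b) = b := fun b => rfl
  have h1 : QRel (fun b : {B : Finset α // P B} => b.1) (x.map f) (y.map f) := by
    apply hw
    rw [mU_map f (fun i => rfl), mU_map f (fun i => rfl)]
    exact hxy
  have h2 := QRel.map (β := fun b : {B : Finset α // P B} => b.1)
    (γ := fun b : {B : Finset α // Q B} => b.1) g (fun i => rfl) h1
  rw [Multiset.map_map, Multiset.map_map] at h2
  simpa [Function.comp, hfg] using h2

lemma wq_base_nonempty {σ : Type} {β : σ → Finset α} (h : Wq β) (i : σ) : β i ≠ ∅ := by
  intro hemp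
  have h0 : mU β {i} = mU β 0 := by
    rw [mU_singleton, mU_zero, hemp]; rfl
  have := (h {i} 0 h0).card_eq
  simp at this

-- counting helpers ----------------------------------------------------------

lemma count_finset_val (B : Finset α) (a : α) :
    Multiset.count a B.val = if a ∈ B then 1 else 0 := by
  by_cases h : a ∈ B
  · rw [if_pos h]
    exact Multiset.count_eq_one_of_mem B.nodup h
  · rw [if_neg h]
    exact Multiset.count_eq_zero_of_notMem h

lemma union_val_of_disjoint {B D : Finset α} (h : Disjoint B D) :
    (B ∪ D).val = B.val + D.val := by
  rw [← Finset.disjUnion_eq_union B D h]; rfl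

lemma mem_mU {σ : Type} {β : σ → Finset α} {a : α} {m : Multiset σ} :
    a ∈ mU β m ↔ ∃ i ∈ m, a ∈ β i := by
  induction m using Multiset.induction with
  | empty => simp
  | cons i m ih =>
      rw [mU_cons, Multiset.mem_add, ih]
      constructor
      · rintro (h | ⟨j, hj, hja⟩)
        · exact ⟨i, Multiset.mem_cons_self i m, h⟩
        · exact ⟨j, Multiset.mem_cons_of_mem hj, hja⟩
      · rintro ⟨j, hj, hja⟩
        rcases Multiset.mem_cons.1 hj with rfl | hj'
        · exact Or.inl hja
        · exact Or.inr ⟨j, hj', hja⟩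

lemma card_mU {σ : Type} {β : σ → Finset α} {r : ℕ} {m : Multiset σ}
    (h : ∀ i ∈ m, (β i).card = r) :
    Multiset.card (mU β m) = Multiset.card m * r := by
  induction m using Multiset.induction with
  | empty => simp
  | cons i m ih =>
      rw [mU_cons, Multiset.card_add, ih (fun j hj => h j (Multiset.mem_cons_of_mem hj)),
        Multiset.card_cons]
      have : Multiset.card (β i).val = r := h i (Multiset.mem_cons_self i m)
      rw [this]; ring

/-- a multiset is determined by its cardinality together with counts away from `c` -/
lemma multiset_eq_of_count_off {c : α} {M M' : Multiset α}
    (hcard : Multiset.card M = Multiset.card M')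
    (h : ∀ a, a ≠ c → Multiset.count a M = Multiset.count a M') : M = M' := by
  have hfil : M.filter (fun a => ¬ (c = a)) = M'.filter (fun a => ¬ (c = a)) := by
    ext a
    rw [Multiset.count_filter, Multiset.count_filter]
    by_cases hac : c = a
    · rw [if_neg (by simpa using hac), if_neg (by simpa using hac)]
    · rw [if_pos (by simpa using hac), if_pos (by simpa using hac)]
      exact h a (fun hh => hac hh.symm)
  have key : ∀ N : Multiset α, Multiset.card N =
      Multiset.count c N + Multiset.card (N.filter (fun a => ¬ (c = a))) := by
    intro N
    conv_lhs => rw [← Multiset.filter_add_not (fun a => c = a) N]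
    rw [Multiset.card_add]
    congr 1
    rw [Multiset.count, Multiset.countP_eq_card_filter]
  have hc : Multiset.count c M = Multiset.count c M' := by
    have h1 := key M
    have h2 := key M'
    rw [hfil] at h1
    omega
  ext a
  by_cases hac : a = c
  · subst hac; exact hc
  · exact h a hac

-- pair machinery ------------------------------------------------------------

section Pairs

variable (P₁ P₂ : Finset α → Prop)

/-- the series predicate: disjoint unions of bases -/
def PSc (T : Finset α) : Prop :=
  ∃ B D : Finset α, P₁ B ∧ P₂ D ∧ Disjoint B D ∧ T = B ∪ D

/-- decompositions: pairs of disjoint bases -/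
abbrev SPair : Type := {p : Finset α × Finset α // P₁ p.1 ∧ P₂ p.2 ∧ Disjoint p.1 p.2}

variable {P₁ P₂}

def pB (p : SPair P₁ P₂) : {B : Finset α // P₁ B} := ⟨p.1.1, p.2.1⟩
def pD (p : SPair P₁ P₂) : {B : Finset α // P₂ B} := ⟨p.1.2, p.2.2.1⟩
def pU (p : SPair P₁ P₂) : {T : Finset α // PSc P₁ P₂ T} :=
  ⟨p.1.1 ∪ p.1.2, ⟨p.1.1, p.1.2, p.2.1, p.2.2.1, p.2.2.2, rfl⟩⟩

lemma pU_val (p : SPair P₁ P₂) : (pU p).1.val = p.1.1.val + p.1.2.val :=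
  union_val_of_disjoint p.2.2.2

def mB (P : Multiset (SPair P₁ P₂)) : Multiset {B : Finset α // P₁ B} := P.map pB
def mD (P : Multiset (SPair P₁ P₂)) : Multiset {B : Finset α // P₂ B} := P.map pD

@[simp] lemma mB_zero : mB (0 : Multiset (SPair P₁ P₂)) = 0 := rfl
@[simp] lemma mD_zero : mD (0 : Multiset (SPair P₁ P₂)) = 0 := rfl
@[simp] lemma mB_cons (p : SPair P₁ P₂) (P : Multiset (SPair P₁ P₂)) :
    mB (p ::ₘ P) = pB p ::ₘ mB P := Multiset.map_cons _ _ _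
@[simp] lemma mD_cons (p : SPair P₁ P₂) (P : Multiset (SPair P₁ P₂)) :
    mD (p ::ₘ P) = pD p ::ₘ mD P := Multiset.map_cons _ _ _
@[simp] lemma card_mB (P : Multiset (SPair P₁ P₂)) :
    Multiset.card (mB P) = Multiset.card P := Multiset.card_map _ _
@[simp] lemma card_mD (P : Multiset (SPair P₁ P₂)) :
    Multiset.card (mD P) = Multiset.card P := Multiset.card_map _ _

lemma mU_pU_split (P : Multiset (SPair P₁ P₂)) :
    mU Subtype.val (P.map pU) = mU Subtype.val (mB P) + mU Subtype.val (mD P) := by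
  induction P using Multiset.induction with
  | empty => rfl
  | cons p P ih =>
      rw [Multiset.map_cons, mU_cons, ih, mB_cons, mD_cons, mU_cons, mU_cons]
      show (pU p).1.val + _ = _
      rw [pU_val]
      show _ = (pB p).1.val + _ + ((pD p).1.val + _)
      have hb : (pB p).1.val = p.1.1.val := rfl
      have hd : (pD p).1.val = p.1.2.val := rfl
      rw [hb, hd]
      abel

/-- a quadratic exchange step at the level of decompositions -/
def PairStep (P Q : Multiset (SPair P₁ P₂)) : Prop :=
  ∃ (p q p' q' : SPair P₁ P₂) (w : Multiset (SPair P₁ P₂)), P = p ::ₘ q ::ₘ w ∧ Q = p' ::ₘ q' ::ₘ w ∧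
    p.1.1.val + p.1.2.val + (q.1.1.val + q.1.2.val)
      = p'.1.1.val + p'.1.2.val + (q'.1.1.val + q'.1.2.val)

def PairRel : Multiset (SPair P₁ P₂) → Multiset (SPair P₁ P₂) → Prop :=
  Relation.ReflTransGen PairStep

lemma PairRel.refl (P : Multiset (SPair P₁ P₂)) : PairRel P P := ReflTransGen.refl

lemma PairRel.trans {P Q R : Multiset (SPair P₁ P₂)} (h : PairRel P Q) (h' : PairRel Q R) :
    PairRel P R := ReflTransGen.trans h h'

lemma PairStep.toQStep {P Q : Multiset (SPair P₁ P₂)} (h : PairStep P Q) :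
    QStep Subtype.val (P.map pU) (Q.map pU) := by
  obtain ⟨p, q, p', q', w, h1, h2, h3⟩ := h
  subst h1 h2
  refine ⟨pU p, pU q, pU p', pU q', w.map pU, by simp, by simp, ?_⟩
  show (pU p).1.val + (pU q).1.val = (pU p').1.val + (pU q').1.val
  rw [pU_val, pU_val, pU_val, pU_val]
  exact h3

lemma PairRel.toQRel {P Q : Multiset (SPair P₁ P₂)} (h : PairRel P Q) :
    QRel Subtype.val (P.map pU) (Q.map pU) := by
  induction h with
  | refl => exact ReflTransGen.refl
  | tail _ hstep ih => exact ih.trans (ReflTransGen.single hstep.toQStep)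

lemma PairStep.cons {P Q : Multiset (SPair P₁ P₂)} (a : SPair P₁ P₂) (h : PairStep P Q) :
    PairStep (a ::ₘ P) (a ::ₘ Q) := by
  obtain ⟨p, q, p', q', w, h1, h2, h3⟩ := h
  subst h1 h2
  exact ⟨p, q, p', q', a ::ₘ w, by rw [Multiset.cons_swap a, Multiset.cons_swap a q],
    by rw [Multiset.cons_swap a, Multiset.cons_swap a q'], h3⟩

lemma PairRel.cons {P Q : Multiset (SPair P₁ P₂)} (a : SPair P₁ P₂) (h : PairRel P Q) :
    PairRel (a ::ₘ P) (a ::ₘ Q) := by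
  induction h with
  | refl => exact ReflTransGen.refl
  | tail _ hstep ih => exact ih.trans (ReflTransGen.single (hstep.cons a))

lemma pairing_helper {A₁ A₂ A₃ A₄ E₁ E₂ : Prop} [Decidable A₁] [Decidable A₂] [Decidable A₃]
    [Decidable A₄]
    (hcnt : (if A₁ then 1 else 0) + (if A₂ then 1 else 0)
      = (if A₃ then 1 else 0) + ((if A₄ then 1 else 0) : ℕ))
    (h1 : ¬(A₁ ∧ E₁)) (h2 : ¬(A₂ ∧ E₂)) :
    (¬(A₃ ∧ E₁) ∧ ¬(A₄ ∧ E₂)) ∨ (¬(A₃ ∧ E₂) ∧ ¬(A₄ ∧ E₁)) := by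
  by_cases e1 : E₁ <;> by_cases e2 : E₂ <;> by_cases a1 : A₁ <;> by_cases a2 : A₂ <;>
    by_cases a3 : A₃ <;> by_cases a4 : A₄ <;>
    simp only [a1, a2, a3, a4, if_true, if_false, ite_true, ite_false] at hcnt <;>
    first | omega | tauto

lemma disj_of_not_both {c : α} (hint : ∀ B D, P₁ B → P₂ D → ∀ a, a ∈ B → a ∈ D → a = c)
    {B D : Finset α} (hB : P₁ B) (hD : P₂ D) (h : ¬ (c ∈ B ∧ c ∈ D)) : Disjoint B D := by
  rw [Finset.disjoint_left]
  intro a haB haD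
  have hac := hint B D hB hD a haB haD
  subst hac
  exact h ⟨haB, haD⟩

lemma lift_B {c : α} (hint : ∀ B D, P₁ B → P₂ D → ∀ a, a ∈ B → a ∈ D → a = c)
    (x₁ : Multiset {B : Finset α // P₁ B}) (P : Multiset (SPair P₁ P₂))
    (h : QRel Subtype.val (mB P) x₁) :
    ∃ Q, PairRel P Q ∧ mB Q = x₁ ∧ mD Q = mD P := by
  induction h with
  | refl => exact ⟨P, PairRel.refl P, rfl, rfl⟩
  | @tail y z hy hstep ih =>
      obtain ⟨Q, hPQ, hmBQ, hmDQ⟩ := ih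
      obtain ⟨b₁, b₂, b₃, b₄, w, hy1, hz, hsum⟩ := hstep
      rw [hy1] at hmBQ
      obtain ⟨q₁, hq₁mem, hq₁B, hrest⟩ := (Multiset.map_eq_cons pB Q _ _).mpr hmBQ
      obtain ⟨q₂, hq₂mem, hq₂B, hrest2⟩ := (Multiset.map_eq_cons pB (Q.erase q₁) _ _).mpr hrest
      set W := (Q.erase q₁).erase q₂ with hW
      have hQdec : Q = q₁ ::ₘ q₂ ::ₘ W := by
        rw [hW, Multiset.cons_erase hq₂mem, Multiset.cons_erase hq₁mem]
      have hb1 : q₁.1.1 = b₁.1 := congrArg Subtype.val hq₁B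
      have hb2 : q₂.1.1 = b₂.1 := congrArg Subtype.val hq₂B
      have hcnt : (if c ∈ b₁.1 then 1 else 0) + (if c ∈ b₂.1 then 1 else 0)
          = (if c ∈ b₃.1 then 1 else 0) + ((if c ∈ b₄.1 then 1 else 0) : ℕ) := by
        have hcc := congrArg (Multiset.count c) hsum
        rw [Multiset.count_add, Multiset.count_add, count_finset_val, count_finset_val,
          count_finset_val, count_finset_val] at hcc
        exact hcc
      have hnb1 : ¬ (c ∈ b₁.1 ∧ c ∈ q₁.1.2) := by
        rw [← hb1]
        rintro ⟨ha, hb⟩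
        exact (Finset.disjoint_left.1 q₁.2.2.2 ha) hb
      have hnb2 : ¬ (c ∈ b₂.1 ∧ c ∈ q₂.1.2) := by
        rw [← hb2]
        rintro ⟨ha, hb⟩
        exact (Finset.disjoint_left.1 q₂.2.2.2 ha) hb
      have hsum' : q₁.1.1.val + q₂.1.1.val = b₃.1.val + b₄.1.val := by
        rw [hb1, hb2]; exact hsum
      have hpair : (¬(c ∈ b₃.1 ∧ c ∈ q₁.1.2) ∧ ¬(c ∈ b₄.1 ∧ c ∈ q₂.1.2)) ∨
          (¬(c ∈ b₃.1 ∧ c ∈ q₂.1.2) ∧ ¬(c ∈ b₄.1 ∧ c ∈ q₁.1.2)) :=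
        pairing_helper hcnt hnb1 hnb2
      rcases hpair with ⟨hA, hB'⟩ | ⟨hA, hB'⟩
      · refine ⟨(⟨(b₃.1, q₁.1.2), b₃.2, q₁.2.2.1, disj_of_not_both hint b₃.2 q₁.2.2.1 hA⟩ :
            SPair P₁ P₂) ::ₘ
          (⟨(b₄.1, q₂.1.2), b₄.2, q₂.2.2.1, disj_of_not_both hint b₄.2 q₂.2.2.1 hB'⟩ :
            SPair P₁ P₂) ::ₘ W,
          hPQ.trans (ReflTransGen.single ⟨q₁, q₂, _, _, W, hQdec, rfl, ?_⟩), ?_, ?_⟩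
        · show q₁.1.1.val + q₁.1.2.val + (q₂.1.1.val + q₂.1.2.val)
            = b₃.1.val + q₁.1.2.val + (b₄.1.val + q₂.1.2.val)
          calc q₁.1.1.val + q₁.1.2.val + (q₂.1.1.val + q₂.1.2.val)
              = (q₁.1.1.val + q₂.1.1.val) + (q₁.1.2.val + q₂.1.2.val) := by abel
            _ = (b₃.1.val + b₄.1.val) + (q₁.1.2.val + q₂.1.2.val) := by rw [hsum']
            _ = b₃.1.val + q₁.1.2.val + (b₄.1.val + q₂.1.2.val) := by abel
        · rw [hz, mB_cons, mB_cons, show mB W = w from hrest2]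
          rfl
        · rw [mD_cons, mD_cons, ← hmDQ, hQdec, mD_cons, mD_cons]
          rfl
      · refine ⟨(⟨(b₃.1, q₂.1.2), b₃.2, q₂.2.2.1, disj_of_not_both hint b₃.2 q₂.2.2.1 hA⟩ :
            SPair P₁ P₂) ::ₘ
          (⟨(b₄.1, q₁.1.2), b₄.2, q₁.2.2.1, disj_of_not_both hint b₄.2 q₁.2.2.1 hB'⟩ :
            SPair P₁ P₂) ::ₘ W,
          hPQ.trans (ReflTransGen.single ⟨q₁, q₂, _, _, W, hQdec, rfl, ?_⟩), ?_, ?_⟩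
        · show q₁.1.1.val + q₁.1.2.val + (q₂.1.1.val + q₂.1.2.val)
            = b₃.1.val + q₂.1.2.val + (b₄.1.val + q₁.1.2.val)
          calc q₁.1.1.val + q₁.1.2.val + (q₂.1.1.val + q₂.1.2.val)
              = (q₁.1.1.val + q₂.1.1.val) + (q₁.1.2.val + q₂.1.2.val) := by abel
            _ = (b₃.1.val + b₄.1.val) + (q₁.1.2.val + q₂.1.2.val) := by rw [hsum']
            _ = b₃.1.val + q₂.1.2.val + (b₄.1.val + q₁.1.2.val) := by abel
        · rw [hz, mB_cons, mB_cons, show mB W = w from hrest2]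
          rfl
        · rw [mD_cons, mD_cons, ← hmDQ, hQdec, mD_cons, mD_cons, Multiset.cons_swap]
          rfl

lemma lift_D {c : α} (hint : ∀ B D, P₁ B → P₂ D → ∀ a, a ∈ B → a ∈ D → a = c)
    (x₂ : Multiset {B : Finset α // P₂ B}) (P : Multiset (SPair P₁ P₂))
    (h : QRel Subtype.val (mD P) x₂) :
    ∃ Q, PairRel P Q ∧ mD Q = x₂ ∧ mB Q = mB P := by
  induction h with
  | refl => exact ⟨P, PairRel.refl P, rfl, rfl⟩
  | @tail y z hy hstep ih =>
      obtain ⟨Q, hPQ, hmDQ, hmBQ⟩ := ih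
      obtain ⟨b₁, b₂, b₃, b₄, w, hy1, hz, hsum⟩ := hstep
      rw [hy1] at hmDQ
      obtain ⟨q₁, hq₁mem, hq₁D, hrest⟩ := (Multiset.map_eq_cons pD Q _ _).mpr hmDQ
      obtain ⟨q₂, hq₂mem, hq₂D, hrest2⟩ := (Multiset.map_eq_cons pD (Q.erase q₁) _ _).mpr hrest
      set W := (Q.erase q₁).erase q₂ with hW
      have hQdec : Q = q₁ ::ₘ q₂ ::ₘ W := by
        rw [hW, Multiset.cons_erase hq₂mem, Multiset.cons_erase hq₁mem]
      have hb1 : q₁.1.2 = b₁.1 := congrArg Subtype.val hq₁D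
      have hb2 : q₂.1.2 = b₂.1 := congrArg Subtype.val hq₂D
      have hcnt : (if c ∈ b₁.1 then 1 else 0) + (if c ∈ b₂.1 then 1 else 0)
          = (if c ∈ b₃.1 then 1 else 0) + ((if c ∈ b₄.1 then 1 else 0) : ℕ) := by
        have hcc := congrArg (Multiset.count c) hsum
        rw [Multiset.count_add, Multiset.count_add, count_finset_val, count_finset_val,
          count_finset_val, count_finset_val] at hcc
        exact hcc
      have hnb1 : ¬ (c ∈ q₁.1.1 ∧ c ∈ b₁.1) := by
        rw [← hb1]
        rintro ⟨ha, hb⟩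
        exact (Finset.disjoint_left.1 q₁.2.2.2 ha) hb
      have hnb2 : ¬ (c ∈ q₂.1.1 ∧ c ∈ b₂.1) := by
        rw [← hb2]
        rintro ⟨ha, hb⟩
        exact (Finset.disjoint_left.1 q₂.2.2.2 ha) hb
      have hsum' : q₁.1.2.val + q₂.1.2.val = b₃.1.val + b₄.1.val := by
        rw [hb1, hb2]; exact hsum
      have hpair : (¬(c ∈ b₃.1 ∧ c ∈ q₁.1.1) ∧ ¬(c ∈ b₄.1 ∧ c ∈ q₂.1.1)) ∨
          (¬(c ∈ b₃.1 ∧ c ∈ q₂.1.1) ∧ ¬(c ∈ b₄.1 ∧ c ∈ q₁.1.1)) :=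
        pairing_helper hcnt (fun h => hnb1 ⟨h.2, h.1⟩) (fun h => hnb2 ⟨h.2, h.1⟩)
      rcases hpair with ⟨hA, hB'⟩ | ⟨hA, hB'⟩
      · refine ⟨(⟨(q₁.1.1, b₃.1), q₁.2.1, b₃.2, disj_of_not_both hint q₁.2.1 b₃.2 (fun h => hA ⟨h.2, h.1⟩)⟩ :
            SPair P₁ P₂) ::ₘ
          (⟨(q₂.1.1, b₄.1), q₂.2.1, b₄.2, disj_of_not_both hint q₂.2.1 b₄.2 (fun h => hB' ⟨h.2, h.1⟩)⟩ :
            SPair P₁ P₂) ::ₘ W,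
          hPQ.trans (ReflTransGen.single ⟨q₁, q₂, _, _, W, hQdec, rfl, ?_⟩), ?_, ?_⟩
        · show q₁.1.1.val + q₁.1.2.val + (q₂.1.1.val + q₂.1.2.val)
            = q₁.1.1.val + b₃.1.val + (q₂.1.1.val + b₄.1.val)
          calc q₁.1.1.val + q₁.1.2.val + (q₂.1.1.val + q₂.1.2.val)
              = (q₁.1.2.val + q₂.1.2.val) + (q₁.1.1.val + q₂.1.1.val) := by abel
            _ = (b₃.1.val + b₄.1.val) + (q₁.1.1.val + q₂.1.1.val) := by rw [hsum']
            _ = q₁.1.1.val + b₃.1.val + (q₂.1.1.val + b₄.1.val) := by abel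
        · rw [hz, mD_cons, mD_cons, show mD W = w from hrest2]
          rfl
        · rw [mB_cons, mB_cons, ← hmBQ, hQdec, mB_cons, mB_cons]
          rfl
      · refine ⟨(⟨(q₂.1.1, b₃.1), q₂.2.1, b₃.2, disj_of_not_both hint q₂.2.1 b₃.2 (fun h => hA ⟨h.2, h.1⟩)⟩ :
            SPair P₁ P₂) ::ₘ
          (⟨(q₁.1.1, b₄.1), q₁.2.1, b₄.2, disj_of_not_both hint q₁.2.1 b₄.2 (fun h => hB' ⟨h.2, h.1⟩)⟩ :
            SPair P₁ P₂) ::ₘ W,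
          hPQ.trans (ReflTransGen.single ⟨q₁, q₂, _, _, W, hQdec, rfl, ?_⟩), ?_, ?_⟩
        · show q₁.1.1.val + q₁.1.2.val + (q₂.1.1.val + q₂.1.2.val)
            = q₂.1.1.val + b₃.1.val + (q₁.1.1.val + b₄.1.val)
          calc q₁.1.1.val + q₁.1.2.val + (q₂.1.1.val + q₂.1.2.val)
              = (q₁.1.2.val + q₂.1.2.val) + (q₁.1.1.val + q₂.1.1.val) := by abel
            _ = (b₃.1.val + b₄.1.val) + (q₁.1.1.val + q₂.1.1.val) := by rw [hsum']
            _ = q₂.1.1.val + b₃.1.val + (q₁.1.1.val + b₄.1.val) := by abel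
        · rw [hz, mD_cons, mD_cons, show mD W = w from hrest2]
          rfl
        · rw [mB_cons, mB_cons, ← hmBQ, hQdec, mB_cons, mB_cons, Multiset.cons_swap]
          rfl

-- swap connectivity ---------------------------------------------------------

def cnt0 (c : α) (P : Multiset (SPair P₁ P₂)) : ℕ :=
  Multiset.countP (fun p => c ∉ p.1.1 ∧ c ∉ p.1.2) P

lemma cnt_split (c : α) (P : Multiset (SPair P₁ P₂)) :
    Multiset.countP (fun p => c ∈ (pB p).1) P + Multiset.countP (fun p => c ∈ (pD p).1) P
      + cnt0 c P = Multiset.card P := by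
  induction P using Multiset.induction with
  | empty => rfl
  | cons p P ih =>
      have hnb : ¬ (c ∈ p.1.1 ∧ c ∈ p.1.2) := fun h =>
        (Finset.disjoint_left.1 p.2.2.2 h.1) h.2
      rw [cnt0, Multiset.countP_cons, Multiset.countP_cons, Multiset.countP_cons,
        Multiset.card_cons]
      rw [cnt0] at ih
      by_cases hB : c ∈ p.1.1
      · have hD : c ∉ p.1.2 := fun h => hnb ⟨hB, h⟩
        rw [if_pos (show c ∈ (pB p).1 from hB), if_neg (show ¬ c ∈ (pD p).1 from hD),
          if_neg (show ¬ (c ∉ p.1.1 ∧ c ∉ p.1.2) by simp [hB])]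
        omega
      · by_cases hD : c ∈ p.1.2
        · rw [if_neg (show ¬ c ∈ (pB p).1 from hB), if_pos (show c ∈ (pD p).1 from hD),
            if_neg (show ¬ (c ∉ p.1.1 ∧ c ∉ p.1.2) by simp [hD])]
          omega
        · rw [if_neg (show ¬ c ∈ (pB p).1 from hB), if_neg (show ¬ c ∈ (pD p).1 from hD),
            if_pos ⟨hB, hD⟩]
          omega

lemma countP_mB (P : Multiset (SPair P₁ P₂)) (pr : {B : Finset α // P₁ B} → Prop)
    [DecidablePred pr] :
    Multiset.countP pr (mB P) = Multiset.countP (fun p => pr (pB p)) P := by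
  induction P using Multiset.induction with
  | empty => rfl
  | cons p P ih => rw [mB_cons, Multiset.countP_cons, Multiset.countP_cons, ih]

lemma countP_mD (P : Multiset (SPair P₁ P₂)) (pr : {B : Finset α // P₂ B} → Prop)
    [DecidablePred pr] :
    Multiset.countP pr (mD P) = Multiset.countP (fun p => pr (pD p)) P := by
  induction P using Multiset.induction with
  | empty => rfl
  | cons p P ih => rw [mD_cons, Multiset.countP_cons, Multiset.countP_cons, ih]

lemma swap_conn {c : α} (hint : ∀ B D, P₁ B → P₂ D → ∀ a, a ∈ B → a ∈ D → a = c) :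
    ∀ (n : ℕ) (P Q : Multiset (SPair P₁ P₂)), Multiset.card P = n →
      mB P = mB Q → mD P = mD Q → PairRel P Q := by
  intro n
  induction n with
  | zero =>
      intro P Q hcard hB hD
      have hP0 : P = 0 := Multiset.card_eq_zero.1 hcard
      have hQ0 : Q = 0 := by
        have : Multiset.card Q = 0 := by
          rw [← card_mB Q, ← hB, card_mB, hcard]
        exact Multiset.card_eq_zero.1 this
      rw [hP0, hQ0]
      exact PairRel.refl 0
  | succ n ih =>
      intro P Q hcard hB hD
      have hQcard : Multiset.card Q = n + 1 := by
        rw [← card_mB Q, ← hB, card_mB, hcard]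
      obtain ⟨q₀, hq₀⟩ : ∃ q₀, q₀ ∈ Q := by
        apply Multiset.exists_mem_of_ne_zero
        intro h0
        rw [h0] at hQcard
        simp at hQcard
      have hQdec : Q = q₀ ::ₘ Q.erase q₀ := (Multiset.cons_erase hq₀).symm
      set Q' := Q.erase q₀ with hQ'def
      have hmem : pB q₀ ∈ mB P := by
        rw [hB, hQdec, mB_cons]; exact Multiset.mem_cons_self _ _
      obtain ⟨p₁, hp₁mem, hp₁B⟩ := Multiset.mem_map.1 hmem
      have hBval : p₁.1.1 = q₀.1.1 := congrArg Subtype.val hp₁B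
      by_cases hD0 : pD p₁ = pD q₀
      · -- p₁ coincides with q₀
        have hpq : p₁ = q₀ := by
          apply Subtype.ext
          exact Prod.ext hBval (congrArg Subtype.val hD0)
        set P' := P.erase p₁ with hP'def
        have hPdec : P = p₁ ::ₘ P' := (Multiset.cons_erase hp₁mem).symm
        have hB' : mB P' = mB Q' := by
          have h := hB
          rw [hPdec, hQdec, mB_cons, mB_cons, hpq] at h
          exact (Multiset.cons_inj_right _).1 h
        have hD' : mD P' = mD Q' := by
          have h := hD
          rw [hPdec, hQdec, mD_cons, mD_cons, hpq] at h
          exact (Multiset.cons_inj_right _).1 h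
        have hcard' : Multiset.card P' = n := by
          have := hcard
          rw [hPdec, Multiset.card_cons] at this
          omega
        have hrel := ih P' Q' hcard' hB' hD'
        rw [hPdec, hQdec, hpq]
        exact hrel.cons q₀
      · -- find p₂ carrying the D-part of q₀
        have hmemD : pD q₀ ∈ mD (P.erase p₁) := by
          have h1 : pD q₀ ∈ mD P := by
            rw [hD, hQdec, mD_cons]; exact Multiset.mem_cons_self _ _
          rw [show P = p₁ ::ₘ P.erase p₁ from (Multiset.cons_erase hp₁mem).symm, mD_cons] at h1
          rcases Multiset.mem_cons.1 h1 with h | h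
          · exact absurd h.symm hD0
          · exact h
        obtain ⟨p₂, hp₂mem, hp₂D⟩ := Multiset.mem_map.1 hmemD
        have hDval : p₂.1.2 = q₀.1.2 := congrArg Subtype.val hp₂D
        set W := (P.erase p₁).erase p₂ with hWdef
        have hPdec : P = p₁ ::ₘ p₂ ::ₘ W := by
          rw [hWdef, Multiset.cons_erase hp₂mem, Multiset.cons_erase hp₁mem]
        have hq₀pair : q₀.1 = (p₁.1.1, p₂.1.2) := by
          rw [hBval, hDval]
        have hcardW : Multiset.card W = n - 1 ∧ 1 ≤ n := by
          have := hcard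
          rw [hPdec, Multiset.card_cons, Multiset.card_cons] at this
          omega
        by_cases hsw : ¬ (c ∈ p₂.1.1 ∧ c ∈ p₁.1.2)
        · -- direct swap
          set n₂ : SPair P₁ P₂ := ⟨(p₂.1.1, p₁.1.2), p₂.2.1, p₁.2.2.1,
            disj_of_not_both hint p₂.2.1 p₁.2.2.1 hsw⟩ with hn₂
          have hstep : PairStep P (q₀ ::ₘ n₂ ::ₘ W) := by
            refine ⟨p₁, p₂, q₀, n₂, W, hPdec, rfl, ?_⟩
            show p₁.1.1.val + p₁.1.2.val + (p₂.1.1.val + p₂.1.2.val)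
              = q₀.1.1.val + q₀.1.2.val + (p₂.1.1.val + p₁.1.2.val)
            rw [← hBval, ← hDval]
            abel
          have hB' : mB (n₂ ::ₘ W) = mB Q' := by
            have h := hB
            rw [hPdec, hQdec, mB_cons, mB_cons, mB_cons, ← hp₁B] at h
            have h2 := (Multiset.cons_inj_right _).1 h
            rw [mB_cons, show pB n₂ = pB p₂ from Subtype.ext rfl]
            exact h2
          have hD' : mD (n₂ ::ₘ W) = mD Q' := by
            have h := hD
            rw [hPdec, hQdec, mD_cons, mD_cons, mD_cons, Multiset.cons_swap, ← hp₂D] at h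
            have h2 := (Multiset.cons_inj_right _).1 h
            rw [mD_cons, show pD n₂ = pD p₁ from Subtype.ext rfl]
            exact h2
          have hcard' : Multiset.card (n₂ ::ₘ W) = n := by
            rw [Multiset.card_cons]; omega
          have hrel := ih _ Q' hcard' hB' hD'
          rw [hQdec]
          exact (ReflTransGen.single hstep).trans (hrel.cons q₀)
        · rw [not_not] at hsw
          obtain ⟨hc2B, hc1D⟩ := hsw
          have hq₀B : c ∉ q₀.1.1 := by
            rw [← hBval]
            exact fun h => (Finset.disjoint_left.1 p₁.2.2.2 h) hc1D
          have hq₀D : c ∉ q₀.1.2 := by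
            rw [← hDval]
            exact fun h => (Finset.disjoint_left.1 p₂.2.2.2 hc2B) h
          have hcnt0Q : 0 < cnt0 c Q := by
            rw [cnt0]
            exact Multiset.countP_pos.2 ⟨q₀, hq₀, ⟨hq₀B, hq₀D⟩⟩
          have hcntB : Multiset.countP (fun p => c ∈ (pB p).1) P
              = Multiset.countP (fun p => c ∈ (pB p).1) Q := by
            rw [← countP_mB P (fun b => c ∈ b.1), ← countP_mB Q (fun b => c ∈ b.1), hB]
          have hcntD : Multiset.countP (fun p => c ∈ (pD p).1) P
              = Multiset.countP (fun p => c ∈ (pD p).1) Q := by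
            rw [← countP_mD P (fun b => c ∈ b.1), ← countP_mD Q (fun b => c ∈ b.1), hD]
          have hcnt0P : 0 < cnt0 c P := by
            have h1 := cnt_split c P
            have h2 := cnt_split c Q
            have h3 : Multiset.card P = Multiset.card Q := by rw [hcard, hQcard]
            omega
          obtain ⟨p₃, hp₃P, hp₃prop⟩ := Multiset.countP_pos.1 hcnt0P
          have hne₁ : p₃ ≠ p₁ := fun h => hp₃prop.2 (h ▸ hc1D)
          have hne₂ : p₃ ≠ p₂ := fun h => hp₃prop.1 (h ▸ hc2B)
          have hp₃W : p₃ ∈ W := by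
            have h1 : p₃ ∈ P.erase p₁ := (Multiset.mem_erase_of_ne hne₁).2 hp₃P
            exact (Multiset.mem_erase_of_ne hne₂).2 h1
          set W' := W.erase p₃ with hW'def
          have hWdec : W = p₃ ::ₘ W' := (Multiset.cons_erase hp₃W).symm
          set n₂ : SPair P₁ P₂ := ⟨(p₂.1.1, p₃.1.2), p₂.2.1, p₃.2.2.1,
            disj_of_not_both hint p₂.2.1 p₃.2.2.1 (fun h => hp₃prop.2 h.2)⟩ with hn₂
          set n₃ : SPair P₁ P₂ := ⟨(p₃.1.1, p₂.1.2), p₃.2.1, p₂.2.2.1,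
            disj_of_not_both hint p₃.2.1 p₂.2.2.1 (fun h => hp₃prop.1 h.1)⟩ with hn₃
          set n₄ : SPair P₁ P₂ := ⟨(p₃.1.1, p₁.1.2), p₃.2.1, p₁.2.2.1,
            disj_of_not_both hint p₃.2.1 p₁.2.2.1 (fun h => hp₃prop.1 h.1)⟩ with hn₄
          have hPdec2 : P = p₂ ::ₘ p₃ ::ₘ (p₁ ::ₘ W') := by
            rw [hPdec, hWdec, Multiset.cons_swap p₁ p₂, Multiset.cons_swap p₁ p₃]
          have hstep1 : PairStep P (n₂ ::ₘ n₃ ::ₘ (p₁ ::ₘ W')) := by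
            refine ⟨p₂, p₃, n₂, n₃, p₁ ::ₘ W', hPdec2, rfl, ?_⟩
            show p₂.1.1.val + p₂.1.2.val + (p₃.1.1.val + p₃.1.2.val)
              = p₂.1.1.val + p₃.1.2.val + (p₃.1.1.val + p₂.1.2.val)
            abel
          have hT1 : (n₂ ::ₘ n₃ ::ₘ (p₁ ::ₘ W')) = p₁ ::ₘ n₃ ::ₘ (n₂ ::ₘ W') := by
            rw [Multiset.cons_swap n₂ n₃, Multiset.cons_swap n₂ p₁, Multiset.cons_swap n₃ p₁]
          have hstep2 : PairStep (p₁ ::ₘ n₃ ::ₘ (n₂ ::ₘ W')) (q₀ ::ₘ n₄ ::ₘ (n₂ ::ₘ W')) := by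
            refine ⟨p₁, n₃, q₀, n₄, n₂ ::ₘ W', rfl, rfl, ?_⟩
            show p₁.1.1.val + p₁.1.2.val + (p₃.1.1.val + p₂.1.2.val)
              = q₀.1.1.val + q₀.1.2.val + (p₃.1.1.val + p₁.1.2.val)
            rw [← hBval, ← hDval]
            abel
          have hB' : mB (n₄ ::ₘ n₂ ::ₘ W') = mB Q' := by
            have h := hB
            rw [hPdec, hWdec, hQdec, mB_cons, mB_cons, mB_cons, mB_cons, ← hp₁B] at h
            have h2 := (Multiset.cons_inj_right _).1 h
            rw [mB_cons, mB_cons, show pB n₄ = pB p₃ from Subtype.ext rfl,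
              show pB n₂ = pB p₂ from Subtype.ext rfl, Multiset.cons_swap]
            exact h2
          have hD' : mD (n₄ ::ₘ n₂ ::ₘ W') = mD Q' := by
            have h := hD
            rw [hPdec, hWdec, hQdec, mD_cons, mD_cons, mD_cons, mD_cons,
              Multiset.cons_swap (pD p₁) (pD p₂), ← hp₂D] at h
            have h2 := (Multiset.cons_inj_right _).1 h
            rw [mD_cons, mD_cons, show pD n₄ = pD p₁ from Subtype.ext rfl,
              show pD n₂ = pD p₃ from Subtype.ext rfl]
            exact h2
          have hcard' : Multiset.card (n₄ ::ₘ n₂ ::ₘ W') = n := by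
            have := hcard
            rw [hPdec, hWdec] at this
            simp only [Multiset.card_cons] at this ⊢
            omega
          have hrel := ih _ Q' hcard' hB' hD'
          rw [hQdec]
          exact (ReflTransGen.single hstep1).trans ((hT1 ▸ ReflTransGen.single hstep2).trans
            (hrel.cons q₀))

/-- The combinatorial core: quadratic-move connectivity passes to series connections. -/
lemma wq_core {c : α}
    (hint : ∀ B D, P₁ B → P₂ D → ∀ a, a ∈ B → a ∈ D → a = c)
    (hcard₁ : ∀ B B', P₁ B → P₁ B' → B.card = B'.card)
    (hcard₂ : ∀ B B', P₂ B → P₂ B' → B.card = B'.card)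
    (h₁ : Wq (Subtype.val : {B : Finset α // P₁ B} → Finset α))
    (h₂ : Wq (Subtype.val : {B : Finset α // P₂ B} → Finset α)) :
    Wq (Subtype.val : {T : Finset α // PSc P₁ P₂ T} → Finset α) := by
  classical
  intro x y hxy
  -- choice of decompositions
  have dec0 : ∀ T : {T : Finset α // PSc P₁ P₂ T}, ∃ p : SPair P₁ P₂, pU p = T := by
    intro T
    obtain ⟨B, D, hB, hD, hdisj, hT⟩ := T.2
    exact ⟨⟨(B, D), hB, hD, hdisj⟩, Subtype.ext hT.symm⟩
  choose dec hdec using dec0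
  -- degenerate cases
  have hzero : ∀ z : Multiset {T : Finset α // PSc P₁ P₂ T}, mU Subtype.val z = 0 → z = 0 := by
    intro z hz
    by_contra hz0
    obtain ⟨T, hT⟩ := Multiset.exists_mem_of_ne_zero hz0
    have hU : mU Subtype.val z = T.1.val + mU Subtype.val (z.erase T) := by
      conv_lhs => rw [show z = T ::ₘ z.erase T from (Multiset.cons_erase hT).symm]
      rw [mU_cons]
    rw [hz] at hU
    have hTval : T.1.val = 0 := by
      have hle : T.1.val ≤ 0 := by
        rw [hU]; exact Multiset.le_add_right _ _
      exact Multiset.le_zero.1 hle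
    have hTempty : T.1 = ∅ := Finset.val_eq_zero.1 hTval
    obtain ⟨B, D, hB, hD, hdisj, hT2⟩ := T.2
    have hBempty : B = ∅ := by
      have := hT2 ▸ hTempty
      exact Finset.union_eq_empty.1 this |>.1
    exact wq_base_nonempty h₁ ⟨B, hB⟩ hBempty
  by_cases hx0 : x = 0
  · have hy0 : y = 0 := hzero y (by rw [← hxy, hx0]; rfl)
    rw [hx0, hy0]
    exact QRel.refl 0
  by_cases hy0 : y = 0
  · exact absurd (hzero x (by rw [hxy, hy0]; rfl)) hx0
  -- reference bases and cardinalities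
  obtain ⟨T₀, hT₀⟩ := Multiset.exists_mem_of_ne_zero hx0
  set r₁ := (dec T₀).1.1.card with hr₁def
  set r₂ := (dec T₀).1.2.card with hr₂def
  have hcB : ∀ B : Finset α, P₁ B → B.card = r₁ := fun B h => hcard₁ B _ h (dec T₀).2.1
  have hcD : ∀ D : Finset α, P₂ D → D.card = r₂ := fun D h => hcard₂ D _ h (dec T₀).2.2.1
  have hr₁pos : 0 < r₁ := by
    rw [hr₁def, Finset.card_pos]
    exact Finset.nonempty_iff_ne_empty.2 (wq_base_nonempty h₁ ⟨(dec T₀).1.1, (dec T₀).2.1⟩)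
  have hcT : ∀ T : Finset α, PSc P₁ P₂ T → T.card = r₁ + r₂ := by
    intro T hT
    obtain ⟨B, D, hB, hD, hdisj, hT2⟩ := hT
    rw [hT2, Finset.card_union_of_disjoint hdisj, hcB B hB, hcD D hD]
  -- cardinalities of the multisets agree
  have hcardxy : Multiset.card x = Multiset.card y := by
    have hx := card_mU (β := (Subtype.val : {T : Finset α // PSc P₁ P₂ T} → Finset α))
      (r := r₁ + r₂) (m := x) (fun T _ => hcT T.1 T.2)
    have hy := card_mU (β := (Subtype.val : {T : Finset α // PSc P₁ P₂ T} → Finset α))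
      (r := r₁ + r₂) (m := y) (fun T _ => hcT T.1 T.2)
    rw [hxy, hy] at hx
    exact Nat.eq_of_mul_eq_mul_right (by omega) hx.symm
  -- decomposition multisets
  set P := x.map dec with hPdef
  set Q := y.map dec with hQdef
  have hxP : P.map pU = x := by
    rw [hPdef, Multiset.map_map]
    conv_rhs => rw [show x = x.map id from (Multiset.map_id x).symm]
    exact Multiset.map_congr rfl (fun T _ => hdec T)
  have hyQ : Q.map pU = y := by
    rw [hQdef, Multiset.map_map]
    conv_rhs => rw [show y = y.map id from (Multiset.map_id y).symm]
    exact Multiset.map_congr rfl (fun T _ => hdec T)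
  have hcardPQ : Multiset.card P = Multiset.card Q := by
    rw [hPdef, hQdef, Multiset.card_map, Multiset.card_map]
    exact hcardxy
  have hsplitx : mU Subtype.val x = mU Subtype.val (mB P) + mU Subtype.val (mD P) := by
    rw [← hxP]; exact mU_pU_split P
  have hsplity : mU Subtype.val y = mU Subtype.val (mB Q) + mU Subtype.val (mD Q) := by
    rw [← hyQ]; exact mU_pU_split Q
  have htotal : mU Subtype.val (mB P) + mU Subtype.val (mD P)
      = mU Subtype.val (mB Q) + mU Subtype.val (mD Q) := by
    rw [← hsplitx, ← hsplity]; exact hxy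
  -- equality of the B-marginals
  have hmB : mU Subtype.val (mB P) = mU Subtype.val (mB Q) := by
    apply multiset_eq_of_count_off (c := c)
    · have hp := card_mU (β := (Subtype.val : {B : Finset α // P₁ B} → Finset α))
        (r := r₁) (m := mB P) (fun b _ => hcB b.1 b.2)
      have hq := card_mU (β := (Subtype.val : {B : Finset α // P₁ B} → Finset α))
        (r := r₁) (m := mB Q) (fun b _ => hcB b.1 b.2)
      rw [hp, hq, card_mB, card_mB, hcardPQ]
    · intro a ha
      by_cases hex : ∃ B, P₁ B ∧ a ∈ B
      · have hzD : ∀ m : Multiset {B : Finset α // P₂ B},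
            Multiset.count a (mU Subtype.val m) = 0 := by
          intro m
          rw [Multiset.count_eq_zero]
          intro hmem
          obtain ⟨i, _, hai⟩ := mem_mU.1 hmem
          obtain ⟨B, hB, haB⟩ := hex
          exact ha (hint B i.1 hB i.2 a haB hai)
        have h1 := congrArg (Multiset.count a) htotal
        rw [Multiset.count_add, Multiset.count_add, hzD (mD P), hzD (mD Q),
          add_zero, add_zero] at h1
        exact h1
      · push_neg at hex
        have hz : ∀ m : Multiset {B : Finset α // P₁ B},
            Multiset.count a (mU Subtype.val m) = 0 := by
          intro m
          rw [Multiset.count_eq_zero]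
          intro hmem
          obtain ⟨i, _, hai⟩ := mem_mU.1 hmem
          exact hex i.1 i.2 hai
        rw [hz (mB P), hz (mB Q)]
  have hmD : mU Subtype.val (mD P) = mU Subtype.val (mD Q) := by
    rw [hmB] at htotal
    exact add_left_cancel htotal
  -- now run the three phases
  obtain ⟨P', hPP', hP'B, hP'D⟩ := lift_B hint (mB Q) P (h₁ (mB P) (mB Q) hmB)
  obtain ⟨P'', hP'P'', hP''D, hP''B⟩ := lift_D hint (mD Q) P'
    (h₂ (mD P') (mD Q) (by rw [hP'D]; exact hmD))
  have hswap := swap_conn hint (Multiset.card P'') P'' Q rfl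
    (by rw [hP''B, hP'B]) hP''D
  have htot : PairRel P Q := (hPP'.trans hP'P'').trans hswap
  have := htot.toQRel
  rw [hxP, hyQ] at this
  exact this

end Pairs

end Core

section MatroidLayer

variable {α : Type} [DecidableEq α]

/-- Combinatorial White-type property of a matroid. -/
def QW (M : Matroid α) : Prop :=
  Wq (Subtype.val : {B : Finset α // M.IsBase ↑B} → Finset α)

lemma base_card_eq (M : Matroid α) {B B' : Finset α} (hB : M.IsBase ↑B) (hB' : M.IsBase ↑B') :
    B.card = B'.card := by
  have h := hB.ncard_eq_ncard_of_isBase hB'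
  rwa [Set.ncard_coe_finset, Set.ncard_coe_finset] at h

lemma qw_congr {M N : Matroid α} (h : ∀ B : Finset α, M.IsBase ↑B ↔ N.IsBase ↑B) (hM : QW M) :
    QW N :=
  wq_congr h hM

/-- transfer along deletion of a non-coloop element -/
lemma qw_deletion {M N : Matroid α} {c : α}
    (hb : ∀ B : Finset α, N.IsBase ↑B ↔ (M.IsBase ↑B ∧ c ∉ B)) (hM : QW M) : QW N := by
  intro x y hxy
  set j : {B : Finset α // N.IsBase ↑B} → {B : Finset α // M.IsBase ↑B} :=
    fun b => ⟨b.1, ((hb b.1).1 b.2).1⟩ with hj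
  have hc0 : ∀ z : Multiset {B : Finset α // N.IsBase ↑B},
      Multiset.count c (mU Subtype.val z) = 0 := by
    intro z
    rw [Multiset.count_eq_zero]
    intro hmem
    obtain ⟨i, _, hci⟩ := mem_mU.1 hmem
    exact ((hb i.1).1 i.2).2 hci
  have hrel := hM (x.map j) (y.map j) (by
    rw [mU_map j (fun i => rfl), mU_map j (fun i => rfl)]; exact hxy)
  have reflect : ∀ m₂ : Multiset {B : Finset α // M.IsBase ↑B},
      QRel Subtype.val (x.map j) m₂ →
      ∃ m₂' : Multiset {B : Finset α // N.IsBase ↑B},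
        m₂'.map j = m₂ ∧ QRel Subtype.val x m₂' := by
    intro m₂ h
    induction h with
    | refl => exact ⟨x, rfl, QRel.refl x⟩
    | @tail y' z' hy' hstep ih =>
        obtain ⟨m', hm'map, hm'rel⟩ := ih
        have hmUz' : mU Subtype.val z' = mU Subtype.val (x.map j) := by
          rw [← hstep.mU_eq]; exact (QRel.mU_eq hy').symm
        have hz'c : Multiset.count c (mU Subtype.val z') = 0 := by
          rw [hmUz', mU_map j (fun i => rfl)]
          exact hc0 x
        obtain ⟨i, jj, k, l, w, h1, h2, h3⟩ := hstep
        rw [h1] at hm'map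
        obtain ⟨q₁, hq₁mem, hq₁, hrest⟩ := (Multiset.map_eq_cons j m' _ _).mpr hm'map
        obtain ⟨q₂, hq₂mem, hq₂, hrest2⟩ := (Multiset.map_eq_cons j (m'.erase q₁) _ _).mpr hrest
        set W := (m'.erase q₁).erase q₂ with hWdef
        have hm'dec : m' = q₁ ::ₘ q₂ ::ₘ W := by
          rw [hWdef, Multiset.cons_erase hq₂mem, Multiset.cons_erase hq₁mem]
        have hcfree : ∀ b : {B : Finset α // M.IsBase ↑B}, b ∈ z' → c ∉ b.1 := by
          intro b hbz hcb
          have hle : (b.1).val ≤ mU Subtype.val z' := by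
            conv_rhs => rw [show z' = b ::ₘ z'.erase b from (Multiset.cons_erase hbz).symm]
            rw [mU_cons]
            exact Multiset.le_add_right _ _
          have hcount := Multiset.count_le_of_le c hle
          rw [hz'c, Nat.le_zero] at hcount
          rw [count_finset_val, if_pos hcb] at hcount
          omega
        have hck : c ∉ k.1 := hcfree k (h2 ▸ Multiset.mem_cons_self _ _)
        have hcl : c ∉ l.1 := hcfree l (h2 ▸ Multiset.mem_cons_of_mem (Multiset.mem_cons_self _ _))
        set k' : {B : Finset α // N.IsBase ↑B} := ⟨k.1, (hb k.1).2 ⟨k.2, hck⟩⟩ with hk'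
        set l' : {B : Finset α // N.IsBase ↑B} := ⟨l.1, (hb l.1).2 ⟨l.2, hcl⟩⟩ with hl'
        refine ⟨k' ::ₘ l' ::ₘ W, ?_, ?_⟩
        · rw [Multiset.map_cons, Multiset.map_cons, h2]
          have e1 : j k' = k := Subtype.ext rfl
          have e2 : j l' = l := Subtype.ext rfl
          rw [e1, e2, show Multiset.map j W = w from hrest2]
        · refine hm'rel.trans (ReflTransGen.single ?_)
          refine ⟨q₁, q₂, k', l', W, hm'dec, rfl, ?_⟩
          have e1 : q₁.1 = i.1 := congrArg Subtype.val hq₁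
          have e2 : q₂.1 = jj.1 := congrArg Subtype.val hq₂
          show q₁.1.val + q₂.1.val = k.1.val + l.1.val
          rw [e1, e2]
          exact h3
  obtain ⟨m₂', hmap, hrel'⟩ := reflect (y.map j) hrel
  have hm₂y : m₂' = y := by
    have hinj : Function.Injective j := by
      intro a b hab
      have h2 : (j a).1 = (j b).1 := congrArg Subtype.val hab
      exact Subtype.ext h2
    exact Multiset.map_injective hinj hmap
  rw [← hm₂y]
  exact hrel'

/-- transfer along deletion of a coloop -/
lemma qw_shift {M N : Matroid α} {c : α}
    (hcol : ∀ B : Finset α, M.IsBase ↑B → c ∈ B)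
    (hb : ∀ D : Finset α, N.IsBase ↑D ↔ ∃ B : Finset α, M.IsBase ↑B ∧ D = B.erase c)
    (hpos : ∀ D : Finset α, N.IsBase ↑D → D.Nonempty)
    (hM : QW M) : QW N := by
  intro x y hxy
  have hcN : ∀ b : {D : Finset α // N.IsBase ↑D}, c ∉ b.1 := by
    intro b
    obtain ⟨B, hB, hD⟩ := (hb b.1).1 b.2
    rw [hD]
    exact Finset.notMem_erase c B
  set j : {D : Finset α // N.IsBase ↑D} → {B : Finset α // M.IsBase ↑B} := fun b =>
    ⟨insert c b.1, by
      obtain ⟨B, hB, hD⟩ := (hb b.1).1 b.2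
      have hins : insert c b.1 = B := by rw [hD, Finset.insert_erase (hcol B hB)]
      rw [show ((insert c b.1 : Finset α) : Set α) = (↑B : Set α) from by rw [hins]]
      exact hB⟩ with hj
  set er : {B : Finset α // M.IsBase ↑B} → {D : Finset α // N.IsBase ↑D} := fun b =>
    ⟨b.1.erase c, (hb _).2 ⟨b.1, b.2, rfl⟩⟩ with her
  -- degenerate case
  by_cases hx0 : x = 0
  · have hy0 : y = 0 := by
      by_contra hy0
      obtain ⟨T, hT⟩ := Multiset.exists_mem_of_ne_zero hy0
      have hU : mU Subtype.val y = T.1.val + mU Subtype.val (y.erase T) := by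
        conv_lhs => rw [show y = T ::ₘ y.erase T from (Multiset.cons_erase hT).symm]
        rw [mU_cons]
      rw [← hxy, hx0, mU_zero] at hU
      have hTval : T.1.val = 0 := Multiset.le_zero.1 (by rw [hU]; exact Multiset.le_add_right _ _)
      obtain ⟨a, ha⟩ := hpos T.1 T.2
      have : a ∈ T.1.val := ha
      rw [hTval] at this
      simp at this
    rw [hx0, hy0]
    exact QRel.refl 0
  obtain ⟨T₀, hT₀⟩ := Multiset.exists_mem_of_ne_zero hx0
  set r : ℕ := T₀.1.card with hrdef
  have hrall : ∀ D : Finset α, N.IsBase ↑D → D.card = r := by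
    intro D hD
    obtain ⟨B, hB, hDB⟩ := (hb D).1 hD
    obtain ⟨B₀, hB₀, hDB₀⟩ := (hb T₀.1).1 T₀.2
    rw [hDB, hrdef, hDB₀, Finset.card_erase_of_mem (hcol B hB),
      Finset.card_erase_of_mem (hcol B₀ hB₀), base_card_eq M hB hB₀]
  have hrpos : 0 < r := Finset.card_pos.2 (hpos T₀.1 T₀.2)
  have hcards : Multiset.card x = Multiset.card y := by
    have hx := card_mU (β := (Subtype.val : {D : Finset α // N.IsBase ↑D} → Finset α))
      (r := r) (m := x) (fun b _ => hrall b.1 b.2)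
    have hy := card_mU (β := (Subtype.val : {D : Finset α // N.IsBase ↑D} → Finset α))
      (r := r) (m := y) (fun b _ => hrall b.1 b.2)
    rw [hxy, hy] at hx
    exact Nat.eq_of_mul_eq_mul_right hrpos hx.symm
  -- image of mU under the lift
  have hlift : ∀ z : Multiset {D : Finset α // N.IsBase ↑D},
      mU Subtype.val (z.map j) = Multiset.replicate (Multiset.card z) c + mU Subtype.val z := by
    intro z
    induction z using Multiset.induction with
    | empty => rfl
    | cons b z ih =>
        rw [Multiset.map_cons, mU_cons, ih, mU_cons, Multiset.card_cons,
          Multiset.replicate_succ]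
        show (insert c b.1).val + _ = _
        rw [Finset.insert_val_of_notMem (hcN b)]
        simp only [Multiset.cons_add]
        rw [show (b.1).val + (Multiset.replicate (Multiset.card z) c + mU Subtype.val z)
          = Multiset.replicate (Multiset.card z) c + ((b.1).val + mU Subtype.val z) from by abel]
  have hrel := hM (x.map j) (y.map j) (by rw [hlift, hlift, hxy, hcards])
  -- reflect back using erasure
  have hreflect : ∀ m m₂ : Multiset {B : Finset α // M.IsBase ↑B},
      QRel Subtype.val m m₂ → QRel Subtype.val (m.map er) (m₂.map er) := by
    intro m m₂ h
    induction h with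
    | refl => exact ReflTransGen.refl
    | @tail y' z' hy' hstep ih =>
        refine ih.trans (ReflTransGen.single ?_)
        obtain ⟨i, jj, k, l, w, h1, h2, h3⟩ := hstep
        subst h1 h2
        refine ⟨er i, er jj, er k, er l, w.map er, by simp, by simp, ?_⟩
        show (i.1.erase c).val + (jj.1.erase c).val = (k.1.erase c).val + (l.1.erase c).val
        have key : ∀ A B : Finset α, c ∈ A → c ∈ B →
            (A.erase c).val + (B.erase c).val = ((A.val + B.val).erase c).erase c := by
          intro A B hA hB
          rw [Finset.erase_val, Finset.erase_val,
            Multiset.erase_add_left_pos B.val (Finset.mem_val.mpr hA),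
            Multiset.erase_add_right_pos _ (Finset.mem_val.mpr hB)]
        rw [key i.1 jj.1 (hcol _ i.2) (hcol _ jj.2), key k.1 l.1 (hcol _ k.2) (hcol _ l.2)]
        congr 1
        exact congrArg _ h3
  have hfinal := hreflect _ _ hrel
  rw [Multiset.map_map, Multiset.map_map] at hfinal
  have herj : ∀ b : {D : Finset α // N.IsBase ↑D}, er (j b) = b := by
    intro b
    apply Subtype.ext
    show (insert c b.1).erase c = b.1
    exact Finset.erase_insert (hcN b)
  have hxid : x.map (er ∘ j) = x := by
    conv_rhs => rw [show x = x.map id from (Multiset.map_id x).symm]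
    exact Multiset.map_congr rfl (fun T _ => herj T)
  have hyid : y.map (er ∘ j) = y := by
    conv_rhs => rw [show y = y.map id from (Multiset.map_id y).symm]
    exact Multiset.map_congr rfl (fun T _ => herj T)
  rw [hxid, hyid] at hfinal
  exact hfinal

end MatroidLayer

end SC13


namespace SC13

section MatroidStructure

variable {α : Type} [DecidableEq α]

lemma contract_loop_bases {M' M : Matroid α} {c : α} (h : IsContractionOf M' M c)
    (hl : IsLoopElem M c) : ∀ S : Set α, M'.IsBase S ↔ M.IsBase S := by
  obtain ⟨hE, hBase⟩ := h
  have hMdE : (M✶).E = M.E := Matroid.dual_ground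
  have hco : IsColoopElem M✶ c := by
    intro B hB
    have hBsub : B ⊆ M.E := by
      have h2 := hB.subset_ground
      rwa [hMdE] at h2
    have h2 : M.IsBase (M.E \ B) := (Matroid.dual_isBase_iff hBsub).1 hB
    by_contra hcB
    exact hl.2 _ h2 ⟨hl.1, hcB⟩
  have hE' : M'✶.E = M.E \ {c} := by rw [hE, hMdE]
  intro S
  constructor
  · intro hS
    have hSsub : S ⊆ M.E \ {c} := by
      have h2 := hS.subset_ground
      rwa [← Matroid.dual_ground (M := M'), hE'] at h2
    have hSsub' : S ⊆ M'✶.E := by rw [hE']; exact hSsub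
    have hdual : M'✶.IsBase (M'✶.E \ S) := by
      have hdd := Matroid.dual_dual M'
      exact (Matroid.dual_isBase_iff hSsub').1 (by rwa [hdd])
    rw [hBase] at hdual
    rcases hdual with ⟨_, B, hB, hBeq⟩ | ⟨hnco, _⟩
    swap
    · exact absurd hco hnco
    have hcB : c ∈ B := hco B hB
    have hcMS : c ∈ M.E \ S := ⟨hl.1, fun hcS => (hSsub hcS).2 rfl⟩
    have hBsub : B ⊆ M.E := by
      have h2 := hB.subset_ground; rwa [hMdE] at h2
    have hBeq' : B = M.E \ S := by
      rw [hE'] at hBeq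
      apply Set.eq_of_subset_of_subset <;> intro a ha
      · by_cases hac : a = c
        · subst hac; exact hcMS
        · have h3 : a ∈ B \ {c} := ⟨ha, hac⟩
          rw [← hBeq] at h3
          exact ⟨h3.1.1, h3.2⟩
      · by_cases hac : a = c
        · subst hac; exact hcB
        · have h3 : a ∈ (M.E \ {c}) \ S := ⟨⟨ha.1, hac⟩, ha.2⟩
          rw [hBeq] at h3
          exact h3.1
    have hback : M.IsBase (M.E \ B) := (Matroid.dual_isBase_iff hBsub).1 hB
    rwa [hBeq', Set.diff_diff_cancel_left (fun a haS => (hSsub haS).1)] at hback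
  · intro hS
    have hcS : c ∉ S := hl.2 S hS
    have hSsub : S ⊆ M.E := hS.subset_ground
    have hBd : M✶.IsBase (M.E \ S) := by
      rw [Matroid.dual_isBase_iff Set.diff_subset]
      rwa [Set.diff_diff_cancel_left hSsub]
    have hstep : M'✶.IsBase (M'✶.E \ S) := by
      rw [hBase]
      left
      refine ⟨hco, M.E \ S, hBd, ?_⟩
      rw [hE']
      ext a
      simp only [Set.mem_diff, Set.mem_singleton_iff]
      tauto
    have hSsub' : S ⊆ M'✶.E := by
      rw [hE']
      exact fun a ha => ⟨hSsub ha, fun h2 => hcS (h2 ▸ ha)⟩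
    have h4 := (Matroid.dual_isBase_iff hSsub').2 hstep
    rwa [Matroid.dual_dual] at h4

lemma deletion_coloop_bases {M' M : Matroid α} {c : α} (h : IsDeletionOf M' M c)
    (hc : IsColoopElem M c) : ∀ S : Set α, M'.IsBase S ↔ ∃ B, M.IsBase B ∧ S = B \ {c} := by
  intro S
  rw [h.2 S]
  constructor
  · rintro (⟨_, hB⟩ | ⟨hnc, _⟩)
    · exact hB
    · exact absurd hc hnc
  · intro hB
    exact Or.inl ⟨hc, hB⟩

lemma deletion_noncoloop_bases {M' M : Matroid α} {c : α} (h : IsDeletionOf M' M c)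
    (hc : ¬ IsColoopElem M c) : ∀ S : Set α, M'.IsBase S ↔ (M.IsBase S ∧ c ∉ S) := by
  intro S
  rw [h.2 S]
  constructor
  · rintro (⟨hcc, _⟩ | ⟨_, hB⟩)
    · exact absurd hcc hc
    · exact hB
  · intro hB
    exact Or.inr ⟨hc, hB⟩

lemma disjointSum_char {Ma Mb : Matroid α} (h : Disjoint Ma.E Mb.E) (S : Set α) :
    (Ma.disjointSum Mb h).IsBase S ↔
      ∃ B D, Ma.IsBase B ∧ Mb.IsBase D ∧ Disjoint B D ∧ S = B ∪ D := by
  rw [Matroid.disjointSum_isBase_iff]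
  constructor
  · rintro ⟨h1, h2, h3⟩
    refine ⟨S ∩ Ma.E, S ∩ Mb.E, h1, h2, ?_, ?_⟩
    · exact h.mono Set.inter_subset_right Set.inter_subset_right
    · rw [← Set.inter_union_distrib_left]
      exact (Set.inter_eq_self_of_subset_left h3).symm
  · rintro ⟨B, D, hB, hD, hdisj, rfl⟩
    have hBE := hB.subset_ground
    have hDE := hD.subset_ground
    refine ⟨?_, ?_, Set.union_subset_union hBE hDE⟩
    · rw [Set.union_inter_distrib_right, Set.inter_eq_self_of_subset_left hBE,
        (h.symm.mono_left hDE).inter_eq, Set.union_empty]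
      exact hB
    · rw [Set.union_inter_distrib_right, (h.mono_left hBE).inter_eq,
        Set.inter_eq_self_of_subset_left hDE, Set.empty_union]
      exact hD

lemma set_to_finset_char {MS Ma Mb : Matroid α}
    (hset : ∀ S : Set α, MS.IsBase S ↔ ∃ B D, Ma.IsBase B ∧ Mb.IsBase D ∧ Disjoint B D ∧ S = B ∪ D) :
    ∀ T : Finset α, MS.IsBase ↑T ↔
      PSc (fun B : Finset α => Ma.IsBase ↑B) (fun D : Finset α => Mb.IsBase ↑D) T := by
  intro T
  rw [hset]
  constructor
  · rintro ⟨B, D, hB, hD, hdisj, hT⟩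
    have hBfin : B.Finite := T.finite_toSet.subset (by rw [hT]; exact Set.subset_union_left)
    have hDfin : D.Finite := T.finite_toSet.subset (by rw [hT]; exact Set.subset_union_right)
    refine ⟨hBfin.toFinset, hDfin.toFinset, ?_, ?_, ?_, ?_⟩
    · show Ma.IsBase ↑hBfin.toFinset
      rwa [Set.Finite.coe_toFinset]
    · show Mb.IsBase ↑hDfin.toFinset
      rwa [Set.Finite.coe_toFinset]
    · rw [← Finset.disjoint_coe, Set.Finite.coe_toFinset, Set.Finite.coe_toFinset]
      exact hdisj
    · apply Finset.coe_injective
      rw [Finset.coe_union, Set.Finite.coe_toFinset, Set.Finite.coe_toFinset]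
      exact hT
  · rintro ⟨B, D, hB, hD, hdisj, hT⟩
    refine ⟨↑B, ↑D, hB, hD, Finset.disjoint_coe.2 hdisj, ?_⟩
    rw [hT, Finset.coe_union]

/-- The series-connection step at the level of the combinatorial property. -/
lemma ground_sub {β : Type} {s t : Set β} (h : Disjoint s t) {c : β} : s ∩ t ⊆ {c} := by
  rw [h.inter_eq]
  exact Set.empty_subset _

lemma qw_series {Ma Mb MS : Matroid α} {c : α}
    (hchar : ∀ S : Set α, MS.IsBase S ↔ ∃ B D, Ma.IsBase B ∧ Mb.IsBase D ∧ Disjoint B D ∧ S = B ∪ D)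
    (hground : Ma.E ∩ Mb.E ⊆ {c})
    (hA : QW Ma) (hB : QW Mb) : QW MS := by
  have hfin := set_to_finset_char hchar
  have hint : ∀ B D : Finset α, Ma.IsBase ↑B → Mb.IsBase ↑D → ∀ a, a ∈ B → a ∈ D → a = c := by
    intro B D hB' hD' a haB haD
    exact hground ⟨hB'.subset_ground haB, hD'.subset_ground haD⟩
  have hcore := wq_core (P₁ := fun B : Finset α => Ma.IsBase ↑B)
    (P₂ := fun D : Finset α => Mb.IsBase ↑D) (c := c) hint
    (fun B B' h h' => base_card_eq Ma h h') (fun B B' h h' => base_card_eq Mb h h') hA hB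
  exact wq_congr (fun T => (hfin T).symm) hcore

end MatroidStructure

/-- Characterization of quadratic generation for matroid toric ideals. -/
theorem matroid_char (K : Type) [Field K] {α : Type} [Fintype α] [DecidableEq α]
    (M : Matroid α) :
    GeneratedByQuadBinomials (matroidToricIdeal K M) ↔ QW M :=
  quadgen_iff_wq K (fun b : {B : Finset α // M.IsBase ↑B} => b.1)

end SC13

open SC13 in
/-- Quadratic generation of toric ideals of matroids is preserved by series connections. -/
theorem statement13 (K : Type) [Field K] {α : Type} [Fintype α] [DecidableEq α]
    (M₁ M₂ MS : Matroid α) (c : α) (hE : M₁.E ∩ M₂.E = {c})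
    -- if `c` is neither a loop nor a coloop of `M₁` or `M₂`, the bases of the series
    -- connection are the disjoint unions of a basis of `M₁` and a basis of `M₂`
    (hmain : (¬ IsLoopElem M₁ c ∧ ¬ IsColoopElem M₁ c ∧
        ¬ IsLoopElem M₂ c ∧ ¬ IsColoopElem M₂ c) →
      (MS.E = M₁.E ∪ M₂.E ∧ ∀ S : Set α, MS.IsBase S ↔
        ∃ B D, M₁.IsBase B ∧ M₂.IsBase D ∧ Disjoint B D ∧ S = B ∪ D))
    -- if `c` is a loop of `M₁`, then `S(M₁, M₂) = (M₁ / c) ⊕ M₂`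
    (hloop1 : IsLoopElem M₁ c → ∃ (M₁' : Matroid α) (h : Disjoint M₁'.E M₂.E),
      IsContractionOf M₁' M₁ c ∧ MS = M₁'.disjointSum M₂ h)
    -- if `c` is a coloop of `M₁`, then `S(M₁, M₂) = M₁ ⊕ (M₂ ∖ c)`
    (hcoloop1 : IsColoopElem M₁ c → ∃ (M₂' : Matroid α) (h : Disjoint M₁.E M₂'.E),
      IsDeletionOf M₂' M₂ c ∧ MS = M₁.disjointSum M₂' h)
    -- symmetrically, if `c` is a loop of `M₂`, then `S(M₁, M₂) = M₁ ⊕ (M₂ / c)`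
    (hloop2 : IsLoopElem M₂ c → ∃ (M₂' : Matroid α) (h : Disjoint M₁.E M₂'.E),
      IsContractionOf M₂' M₂ c ∧ MS = M₁.disjointSum M₂' h)
    -- and if `c` is a coloop of `M₂`, then `S(M₁, M₂) = (M₁ ∖ c) ⊕ M₂`
    (hcoloop2 : IsColoopElem M₂ c → ∃ (M₁' : Matroid α) (h : Disjoint M₁'.E M₂.E),
      IsDeletionOf M₁' M₁ c ∧ MS = M₁'.disjointSum M₂ h)
    (h₁ : GeneratedByQuadBinomials (matroidToricIdeal K M₁))
    (h₂ : GeneratedByQuadBinomials (matroidToricIdeal K M₂)) :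
    GeneratedByQuadBinomials (matroidToricIdeal K MS) := by
  rw [matroid_char] at h₁ h₂ ⊢
  by_cases hl1 : IsLoopElem M₁ c
  · obtain ⟨M₁', hdisj, hcon, hMS⟩ := hloop1 hl1
    subst hMS
    have hbases := contract_loop_bases hcon hl1
    have hQW1' : QW M₁' := qw_congr (fun B => (hbases ↑B).symm) h₁
    exact qw_series (c := c) (disjointSum_char hdisj)
      (ground_sub hdisj) hQW1' h₂
  by_cases hl2 : IsLoopElem M₂ c
  · obtain ⟨M₂', hdisj, hcon, hMS⟩ := hloop2 hl2
    subst hMS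
    have hbases := contract_loop_bases hcon hl2
    have hQW2' : QW M₂' := qw_congr (fun B => (hbases ↑B).symm) h₂
    exact qw_series (c := c) (disjointSum_char hdisj)
      (ground_sub hdisj) h₁ hQW2'
  by_cases hco1 : IsColoopElem M₁ c
  · obtain ⟨M₂', hdisj, hdel, hMS⟩ := hcoloop1 hco1
    subst hMS
    by_cases hco2 : IsColoopElem M₂ c
    · have hbases := deletion_coloop_bases hdel hco2
      by_cases hr : M₂'.IsBase (∅ : Set α)
      · -- rank-one coloop : the sum has the same bases as M₁
        refine qw_congr (M := M₁) ?_ h₁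
        intro B
        rw [disjointSum_char hdisj ↑B]
        constructor
        · intro hB
          exact ⟨↑B, ∅, hB, hr, Set.disjoint_empty _, (Set.union_empty _).symm⟩
        · rintro ⟨Ba, D, hBa, hD, hdj, hBeq⟩
          have hD0 : D = ∅ := by
            have h2 := hD.encard_eq_encard_of_isBase hr
            rwa [Set.encard_empty, Set.encard_eq_zero] at h2
          rw [hBeq, hD0, Set.union_empty]
          exact hBa
      · have hbF : ∀ D : Finset α, M₂'.IsBase ↑D ↔
            ∃ B : Finset α, M₂.IsBase ↑B ∧ D = B.erase c := by
          intro D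
          rw [hbases ↑D]
          constructor
          · rintro ⟨B, hB, hD⟩
            have hcB : c ∈ B := hco2 B hB
            have hcD : c ∉ D := by
              intro hc
              have h2 : (c : α) ∈ (↑D : Set α) := hc
              rw [hD] at h2
              exact h2.2 rfl
            have hBfin : B = ↑(insert c D) := by
              rw [Finset.coe_insert, hD, Set.insert_diff_singleton,
                Set.insert_eq_of_mem hcB]
            refine ⟨insert c D, by rw [← hBfin]; exact hB, ?_⟩
            rw [Finset.erase_insert hcD]
          · rintro ⟨B, hB, rfl⟩
            exact ⟨↑B, hB, by rw [Finset.coe_erase]⟩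
        have hpos : ∀ D : Finset α, M₂'.IsBase ↑D → D.Nonempty := by
          intro D hD
          rw [Finset.nonempty_iff_ne_empty]
          rintro rfl
          exact hr (by simpa using hD)
        have hcol : ∀ B : Finset α, M₂.IsBase ↑B → c ∈ B := fun B hB => hco2 ↑B hB
        have hQW2' : QW M₂' := qw_shift hcol hbF hpos h₂
        exact qw_series (c := c) (disjointSum_char hdisj)
          (ground_sub hdisj) h₁ hQW2'
    · have hbases := deletion_noncoloop_bases hdel hco2
      have hbF : ∀ B : Finset α, M₂'.IsBase ↑B ↔ (M₂.IsBase ↑B ∧ c ∉ B) := by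
        intro B
        rw [hbases ↑B]
        exact Iff.rfl
      have hQW2' : QW M₂' := qw_deletion hbF h₂
      exact qw_series (c := c) (disjointSum_char hdisj)
        (ground_sub hdisj) h₁ hQW2'
  by_cases hco2 : IsColoopElem M₂ c
  · obtain ⟨M₁', hdisj, hdel, hMS⟩ := hcoloop2 hco2
    subst hMS
    have hbases := deletion_noncoloop_bases hdel hco1
    have hbF : ∀ B : Finset α, M₁'.IsBase ↑B ↔ (M₁.IsBase ↑B ∧ c ∉ B) := by
      intro B
      rw [hbases ↑B]
      exact Iff.rfl
    have hQW1' : QW M₁' := qw_deletion hbF h₁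
    exact qw_series (c := c) (disjointSum_char hdisj)
      (ground_sub hdisj) hQW1' h₂
  · obtain ⟨_, hchar⟩ := hmain ⟨hl1, hco1, hl2, hco2⟩
    exact qw_series (c := c) hchar (le_of_eq hE) h₁ h₂
end
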